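/- arXiv:math/9409206 — 2 statements merged into one kernel-verified Lean document; each statement's English description precedes it below -/
import Mathlib

section
/- For every n ≥ 1 and every ε ∈ 2^ω, if G_ε is a subgraph of a B_n-free graph G, then the degree of every vertex v of G_ε in G_ε equals the degree of v in G. -/
open SimpleGraph

/-- `H` is isomorphic to a (not necessarily induced) subgraph of `G`:
    there is an injective graph homomorphism from `H` to `G`. -/
def IsSubgraphOf {V W : Type*} (H : SimpleGraph V) (G : SimpleGraph W) : Prop :=
  ∃ f : H →g G, Function.Injective f

/-- `G` is `F`-free: no subgraph of `G` (not necessarily induced) is isomorphic to `F`. -/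
def GraphFree {V W : Type*} (F : SimpleGraph V) (G : SimpleGraph W) : Prop :=
  ¬ IsSubgraphOf F G

/-- The `n`-bridge `B_n`. Vertices: `0 = a`, `1 = b`, `2 = c`,
    `3,…,n+2 = x₁,…,xₙ`, `n+3 = d`, `n+4 = e`.  Edges: `(a,c)`, `(b,c)`,
    `(c,x₁)`, `(xᵢ,xᵢ₊₁)` for `1 ≤ i < n`, `(xₙ,d)`, `(xₙ,e)`. -/
def Bridge (n : ℕ) : SimpleGraph (Fin (n + 5)) :=
  SimpleGraph.fromRel (fun u v =>
    ((u : ℕ) = 0 ∧ (v : ℕ) = 2) ∨ ((u : ℕ) = 1 ∧ (v : ℕ) = 2) ∨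
    (2 ≤ (u : ℕ) ∧ (u : ℕ) < n + 2 ∧ (v : ℕ) = (u : ℕ) + 1) ∨
    ((u : ℕ) = n + 2 ∧ (v : ℕ) = n + 3) ∨ ((u : ℕ) = n + 2 ∧ (v : ℕ) = n + 4))

/-- Core of a drive through (without its exits): the vertices of `K_{n+2}` and, for each
    of the `n` middle vertices, a copy of a dead end minus its top vertex `p_{n+1}`. -/
abbrev TCore (n : ℕ) := Fin (n + 2) ⊕ (Fin n × Fin (2 * n + 3))

/-- Vertex set of the graph `G_ε`:
    * `Sum.inl u`  — the dead end `D^ε` (vertices `0,…,2n+3`, where `0,…,n+2` is the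
      `K_{n+3}` with `k_{n+3} = p₀ = n+2`, and `2n+3 = p_{n+1}` is the left exit
      `l^ε(0)` of the first drive through);
    * `Sum.inr (Sum.inl (m, c))` — the core of the `m`-th drive through `T^ε(m)`;
    * `Sum.inr (Sum.inr ⟨m, c⟩)` — the `m`-th connecting path: the right exit
      `r^ε(m)` (`c = 0`), the interior of the highway `H^ε(m)` of length `n-1+ε(m)`,
      and the left exit `l^ε(m+1)` (`c = n + ε(m) - 1`); when `n = 1` and `ε(m) = 0`
      this path consists of a single vertex `r^ε(m) = l^ε(m+1)`, realizing the
      required identification. -/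
abbrev GV (n : ℕ) (ε : ℕ → Bool) :=
  Fin (2 * n + 4) ⊕ (ℕ × TCore n) ⊕ ((m : ℕ) × Fin (n + (ε m).toNat))

/-- Edges inside the core of a drive through: `K_{n+2}` is complete, each dead-end
    copy carries the dead-end edges, and the vertex `pₙ = 2n+2` of the `i`-th copy is
    joined to `k_{i+1}` (since `p_{n+1}` of that copy is identified with `k_{i+1}`). -/
def TRel (n : ℕ) : TCore n → TCore n → Prop
  | .inl u, .inl v => u ≠ v
  | .inr (i, x), .inr (i', y) => i = i' ∧
      (((x : ℕ) < n + 3 ∧ (y : ℕ) < n + 3 ∧ x ≠ y) ∨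
       (n + 2 ≤ (x : ℕ) ∧ (x : ℕ) < 2 * n + 2 ∧ (y : ℕ) = (x : ℕ) + 1))
  | .inr (i, x), .inl j => (x : ℕ) = 2 * n + 2 ∧ (j : ℕ) = (i : ℕ) + 1
  | _, _ => False

/-- The graph `G_ε`: the dead end `D^ε` whose `p_{n+1}` is the left exit `l^ε(0)`
    joined to `k₁` of `T^ε(0)`; the drive throughs `T^ε(m)`; and for each `m` the
    highway `H^ε(m)` of length `n - 1 + ε(m)` joining the right exit `r^ε(m)`
    (adjacent to `k_{n+2}` of `T^ε(m)`) to the left exit `l^ε(m+1)` (adjacent to `k₁`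
    of `T^ε(m+1)`), where `r^ε(m) = l^ε(m+1)` when `n = 1` and `ε(m) = 0`. -/
def GEps (n : ℕ) (ε : ℕ → Bool) : SimpleGraph (GV n ε) :=
  SimpleGraph.fromRel (fun a b =>
    match a, b with
    | .inl u, .inl v =>
        ((u : ℕ) < n + 3 ∧ (v : ℕ) < n + 3 ∧ u ≠ v) ∨
        (n + 2 ≤ (u : ℕ) ∧ (u : ℕ) < 2 * n + 3 ∧ (v : ℕ) = (u : ℕ) + 1)
    | .inl u, .inr (.inl (m, .inl j)) => (u : ℕ) = 2 * n + 3 ∧ m = 0 ∧ (j : ℕ) = 0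
    | .inr (.inl (m, c)), .inr (.inl (m', c')) => m = m' ∧ TRel n c c'
    | .inr (.inl (m, .inl j)), .inr (.inr ⟨m', c⟩) =>
        (j : ℕ) = n + 1 ∧ m' = m ∧ (c : ℕ) = 0
    | .inr (.inr ⟨m, c⟩), .inr (.inr ⟨m', c'⟩) => m' = m ∧ (c' : ℕ) = (c : ℕ) + 1
    | .inr (.inr ⟨m, c⟩), .inr (.inl (m', .inl j)) =>
        (c : ℕ) = n + (ε m).toNat - 1 ∧ m' = m + 1 ∧ (j : ℕ) = 0
    | _, _ => False)

namespace BB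
open SimpleGraph
variable (n : ℕ) (ε : ℕ → Bool)

def v0 (x : ℕ) : GV n ε := .inl ⟨x % (2*n+4), Nat.mod_lt _ (by omega)⟩
def v1 (m i : ℕ) : GV n ε := .inr (.inl (m, .inl ⟨i % (n+2), Nat.mod_lt _ (by omega)⟩))
def v2 (m i x : ℕ) : GV n ε :=
  if h : 0 < n then
    .inr (.inl (m, .inr (⟨i % n, Nat.mod_lt _ h⟩, ⟨x % (2*n+3), Nat.mod_lt _ (by omega)⟩)))
  else .inl ⟨0, by omega⟩
def v3 (m c : ℕ) : GV n ε :=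
  if h : 0 < n + (ε m).toNat then
    .inr (.inr ⟨m, ⟨c % (n + (ε m).toNat), Nat.mod_lt _ h⟩⟩)
  else .inl ⟨0, by omega⟩

section API
variable {n : ℕ} {ε : ℕ → Bool} (hn : 1 ≤ n)
set_option linter.unusedSectionVars false

include hn in
lemma v2_def (m i x : ℕ) : v2 n ε m i x =
    .inr (.inl (m, .inr (⟨i % n, Nat.mod_lt _ hn⟩, ⟨x % (2*n+3), Nat.mod_lt _ (by omega)⟩))) := by
  rw [v2, dif_pos (show 0 < n by omega)]

include hn in
lemma v3_def (m c : ℕ) : v3 n ε m c =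
    .inr (.inr ⟨m, ⟨c % (n + (ε m).toNat), Nat.mod_lt _ (by omega)⟩⟩) := by
  rw [v3, dif_pos (by omega)]

/- ### equalities and disequalities -/

lemma e00 {x y : ℕ} (hx : x < 2*n+4) (hy : y < 2*n+4) :
    v0 n ε x = v0 n ε y ↔ x = y := by
  rw [v0, v0, Sum.inl.injEq, Fin.mk.injEq, Nat.mod_eq_of_lt hx, Nat.mod_eq_of_lt hy]

lemma e11 {m m' i j : ℕ} (hi : i < n+2) (hj : j < n+2) :
    v1 n ε m i = v1 n ε m' j ↔ m = m' ∧ i = j := by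
  rw [v1, v1, Sum.inr.injEq, Sum.inl.injEq, Prod.mk.injEq, Sum.inl.injEq, Fin.mk.injEq,
    Nat.mod_eq_of_lt hi, Nat.mod_eq_of_lt hj]

include hn in
lemma e22 {m m' i i' x x' : ℕ} (hi : i < n) (hi' : i' < n) (hx : x < 2*n+3) (hx' : x' < 2*n+3) :
    v2 n ε m i x = v2 n ε m' i' x' ↔ m = m' ∧ i = i' ∧ x = x' := by
  rw [v2_def hn, v2_def hn, Sum.inr.injEq, Sum.inl.injEq, Prod.mk.injEq, Sum.inr.injEq,
    Prod.mk.injEq, Fin.mk.injEq, Fin.mk.injEq, Nat.mod_eq_of_lt hi, Nat.mod_eq_of_lt hi',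
    Nat.mod_eq_of_lt hx, Nat.mod_eq_of_lt hx']

lemma e33 {m m' c c' : ℕ} (hc : c < n + (ε m).toNat) (hc' : c' < n + (ε m').toNat) :
    v3 n ε m c = v3 n ε m' c' ↔ m = m' ∧ c = c' := by
  rw [v3, v3, dif_pos (by omega), dif_pos (by omega)]
  constructor
  · intro h
    simp only [Sum.inr.injEq] at h
    obtain ⟨h4, h5⟩ := Sigma.mk.inj_iff.mp h
    subst h4
    refine ⟨rfl, ?_⟩
    have := (Fin.mk.injEq _ _ _ _).mp (eq_of_heq h5)
    rwa [Nat.mod_eq_of_lt hc, Nat.mod_eq_of_lt hc'] at this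
  · rintro ⟨rfl, rfl⟩
    rfl

include hn in
lemma ne01 {x m i : ℕ} : v0 n ε x ≠ v1 n ε m i := by simp [v0, v1]

include hn in
lemma ne02 {x m i y : ℕ} : v0 n ε x ≠ v2 n ε m i y := by rw [v2_def hn]; simp [v0]

include hn in
lemma ne03 {x m c : ℕ} : v0 n ε x ≠ v3 n ε m c := by rw [v3_def hn]; simp [v0]

include hn in
lemma ne12 {m i m' i' y : ℕ} : v1 n ε m i ≠ v2 n ε m' i' y := by rw [v2_def hn]; simp [v1]

include hn in
lemma ne13 {m i m' c : ℕ} : v1 n ε m i ≠ v3 n ε m' c := by rw [v3_def hn]; simp [v1]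

include hn in
lemma ne23 {m i y m' c : ℕ} : v2 n ε m i y ≠ v3 n ε m' c := by
  rw [v3_def hn, v2_def hn]; simp

/- ### adjacencies -/

lemma adj00K {x y : ℕ} (hx : x < n+3) (hy : y < n+3) (hxy : x ≠ y) :
    (GEps n ε).Adj (v0 n ε x) (v0 n ε y) := by
  rw [GEps, fromRel_adj]
  have h1 : x % (2*n+4) = x := Nat.mod_eq_of_lt (by omega)
  have h2 : y % (2*n+4) = y := Nat.mod_eq_of_lt (by omega)
  refine ⟨by rw [Ne, e00 (by omega) (by omega)]; omega, Or.inl (Or.inl ?_)⟩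
  simp only [v0, ne_eq, Fin.mk.injEq, h1, h2]
  exact ⟨by omega, by omega, by omega⟩

lemma adj00P {x y : ℕ} (hx : n+2 ≤ x) (hy : y = x+1) (hy2 : y ≤ 2*n+3) :
    (GEps n ε).Adj (v0 n ε x) (v0 n ε y) := by
  rw [GEps, fromRel_adj]
  have h1 : x % (2*n+4) = x := Nat.mod_eq_of_lt (by omega)
  have h2 : y % (2*n+4) = y := Nat.mod_eq_of_lt (by omega)
  refine ⟨by rw [Ne, e00 (by omega) (by omega)]; omega, Or.inl (Or.inr ?_)⟩
  simp only [v0, h1, h2]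
  omega

include hn in
lemma adj0k : (GEps n ε).Adj (v0 n ε (2*n+3)) (v1 n ε 0 0) := by
  rw [GEps, fromRel_adj]
  refine ⟨ne01 hn, Or.inl ?_⟩
  rw [v0, v1]
  exact ⟨show (2*n+3) % (2*n+4) = 2*n+3 from Nat.mod_eq_of_lt (by omega), rfl,
    show (0:ℕ) % (n+2) = 0 from Nat.zero_mod _⟩

lemma adjkk {m i j : ℕ} (hi : i < n+2) (hj : j < n+2) (hij : i ≠ j) :
    (GEps n ε).Adj (v1 n ε m i) (v1 n ε m j) := by
  rw [GEps, fromRel_adj]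
  refine ⟨by rw [Ne, e11 hi hj]; omega, Or.inl ⟨rfl, ?_⟩⟩
  simp only [v1, TRel, ne_eq, Sum.inl.injEq, Fin.mk.injEq, Nat.mod_eq_of_lt hi,
    Nat.mod_eq_of_lt hj]
  omega

include hn in
lemma adj22K {m i x y : ℕ} (hi : i < n) (hx : x < n+3) (hy : y < n+3) (hxy : x ≠ y) :
    (GEps n ε).Adj (v2 n ε m i x) (v2 n ε m i y) := by
  rw [GEps, fromRel_adj]
  have h1 : x % (2*n+3) = x := Nat.mod_eq_of_lt (by omega)
  have h2 : y % (2*n+3) = y := Nat.mod_eq_of_lt (by omega)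
  refine ⟨by rw [Ne, e22 hn hi hi (by omega) (by omega)]; omega, Or.inl ?_⟩
  rw [v2_def hn, v2_def hn]
  refine ⟨rfl, rfl, Or.inl ?_⟩
  simp only [ne_eq, Fin.mk.injEq, h1, h2]
  exact ⟨by omega, by omega, by omega⟩

include hn in
lemma adj22P {m i x y : ℕ} (hi : i < n) (hx : n+2 ≤ x) (hy : y = x+1) (hy2 : y ≤ 2*n+2) :
    (GEps n ε).Adj (v2 n ε m i x) (v2 n ε m i y) := by
  rw [GEps, fromRel_adj]
  have h1 : x % (2*n+3) = x := Nat.mod_eq_of_lt (by omega)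
  have h2 : y % (2*n+3) = y := Nat.mod_eq_of_lt (by omega)
  refine ⟨by rw [Ne, e22 hn hi hi (by omega) (by omega)]; omega, Or.inl ?_⟩
  rw [v2_def hn, v2_def hn]
  refine ⟨rfl, rfl, Or.inr ?_⟩
  simp only [h1, h2]
  omega

include hn in
lemma adj2k {m i : ℕ} (hi : i < n) :
    (GEps n ε).Adj (v2 n ε m i (2*n+2)) (v1 n ε m (i+1)) := by
  rw [GEps, fromRel_adj]
  refine ⟨fun h => ne12 hn h.symm, Or.inl ?_⟩
  rw [v2_def hn, v1]
  refine ⟨rfl, ?_, ?_⟩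
  · exact show (2*n+2) % (2*n+3) = 2*n+2 from Nat.mod_eq_of_lt (by omega)
  · simp only [Nat.mod_eq_of_lt (show i+1 < n+2 by omega), Nat.mod_eq_of_lt hi]

include hn in
lemma adjkr {m : ℕ} : (GEps n ε).Adj (v1 n ε m (n+1)) (v3 n ε m 0) := by
  rw [GEps, fromRel_adj]
  refine ⟨ne13 hn, Or.inl ?_⟩
  rw [v1, v3_def hn]
  exact ⟨show (n+1) % (n+2) = n+1 from Nat.mod_eq_of_lt (by omega), rfl,
    show (0:ℕ) % (n + (ε m).toNat) = 0 from Nat.zero_mod _⟩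

include hn in
lemma adj33 {m c c' : ℕ} (hc : c' = c + 1) (hc' : c' < n + (ε m).toNat) :
    (GEps n ε).Adj (v3 n ε m c) (v3 n ε m c') := by
  rw [GEps, fromRel_adj]
  have h1 : c % (n + (ε m).toNat) = c := Nat.mod_eq_of_lt (by omega)
  have h2 : c' % (n + (ε m).toNat) = c' := Nat.mod_eq_of_lt (by omega)
  refine ⟨by rw [Ne, e33 (by omega) (by omega)]; omega, Or.inl ?_⟩
  rw [v3_def hn, v3_def hn]
  refine ⟨rfl, ?_⟩
  simp only [h1, h2]
  omega

include hn in
lemma adj3l {m c : ℕ} (hc : c = n + (ε m).toNat - 1) :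
    (GEps n ε).Adj (v3 n ε m c) (v1 n ε (m+1) 0) := by
  rw [GEps, fromRel_adj]
  have h1 : c % (n + (ε m).toNat) = c := Nat.mod_eq_of_lt (by omega)
  refine ⟨fun h => ne13 hn h.symm, Or.inl ?_⟩
  rw [v3_def hn, v1]
  refine ⟨?_, rfl, show (0:ℕ) % (n+2) = 0 from Nat.zero_mod _⟩
  show c % (n + (ε m).toNat) = n + (ε m).toNat - 1
  omega

include hn in
lemma gv_cases (w : GV n ε) :
    (∃ x, x < 2*n+4 ∧ w = v0 n ε x) ∨ (∃ m i, i < n+2 ∧ w = v1 n ε m i) ∨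
    (∃ m i x, i < n ∧ x < 2*n+3 ∧ w = v2 n ε m i x) ∨
    (∃ m c, c < n + (ε m).toNat ∧ w = v3 n ε m c) := by
  rcases w with ⟨x, hx⟩ | ⟨⟨m, ⟨i, hi⟩ | ⟨⟨i, hi⟩, ⟨x, hx⟩⟩⟩ | ⟨m, c, hc⟩⟩
  · exact Or.inl ⟨x, hx, by simp [v0, Nat.mod_eq_of_lt hx]⟩
  · exact Or.inr (Or.inl ⟨m, i, hi, by simp [v1, Nat.mod_eq_of_lt hi]⟩)
  · refine Or.inr (Or.inr (Or.inl ⟨m, i, x, hi, hx, ?_⟩))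
    rw [v2_def hn]
    simp [Nat.mod_eq_of_lt hi, Nat.mod_eq_of_lt hx]
  · refine Or.inr (Or.inr (Or.inr ⟨m, c, hc, ?_⟩))
    rw [v3_def hn]
    simp [Nat.mod_eq_of_lt hc]

end API
end BB
namespace BB
open SimpleGraph

/-- A "B_n minus one leaf" configuration rooted at `v`, avoiding the set `S`:
a pendant neighbour `b` of `v`, a path `p 0 = v, …, p n` of length `n`, and two
extra neighbours `d`, `e` of `p n`, all distinct and avoiding `S`. -/
def Conf (n : ℕ) (ε : ℕ → Bool) (v : GV n ε) (S : Set (GV n ε)) : Prop :=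
  ∃ b d e : GV n ε, ∃ p : ℕ → GV n ε,
    p 0 = v ∧ (GEps n ε).Adj v b ∧
    (∀ i, i < n → (GEps n ε).Adj (p i) (p (i+1))) ∧
    (GEps n ε).Adj (p n) d ∧ (GEps n ε).Adj (p n) e ∧
    (∀ i j, i ≤ n → j ≤ n → p i = p j → i = j) ∧
    (∀ i, i ≤ n → b ≠ p i ∧ d ≠ p i ∧ e ≠ p i) ∧
    (b ≠ d ∧ b ≠ e ∧ d ≠ e) ∧
    (∀ w ∈ S, w ≠ b ∧ w ≠ d ∧ w ≠ e ∧ ∀ i, i ≤ n → w ≠ p i)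

section Frame
variable {n : ℕ} {ε : ℕ → Bool}

lemma conf_bridge (hn : 1 ≤ n) {V : Type*} (G : SimpleGraph V) (f : GEps n ε →g G)
    (hf : Function.Injective f) {v : GV n ε} {S : Set (GV n ε)} (hC : Conf n ε v S)
    (y : V) (hadj : G.Adj (f v) y) (hy : ∀ u, f u = y → u ∈ S) :
    IsSubgraphOf (Bridge n) G := by
  obtain ⟨b, d, e, p, C1, C2, C3, C4, C5, C6, C7, C8, C9⟩ := hC
  have hyne : ∀ c : GV n ε, (c = b ∨ c = d ∨ c = e ∨ ∃ i, i ≤ n ∧ c = p i) → y ≠ f c := by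
    rintro c hc rfl
    have hcS := hy c rfl
    obtain ⟨w1, w2, w3, w4⟩ := C9 c hcS
    rcases hc with rfl | rfl | rfl | ⟨i, hi, rfl⟩
    · exact w1 rfl
    · exact w2 rfl
    · exact w3 rfl
    · exact w4 i hi rfl
  set g : Fin (n+5) → V := fun a =>
    if (a : ℕ) = 0 then y else if (a : ℕ) = 1 then f b else if (a : ℕ) = n+3 then f d
    else if (a : ℕ) = n+4 then f e else f (p ((a : ℕ) - 2)) with hg
  have hg0 : ∀ a : Fin (n+5), (a : ℕ) = 0 → g a = y := by
    intro a ha; simp only [hg, ha]; norm_num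
  have hg1 : ∀ a : Fin (n+5), (a : ℕ) = 1 → g a = f b := by
    intro a ha; simp only [hg, ha]; norm_num
  have hgd : ∀ a : Fin (n+5), (a : ℕ) = n+3 → g a = f d := by
    intro a ha; simp [hg, ha]
    intro h; subst h; simp at ha
  have hge : ∀ a : Fin (n+5), (a : ℕ) = n+4 → g a = f e := by
    intro a ha; simp [hg, ha]
    intro h; subst h; simp at ha
  have hgp : ∀ a : Fin (n+5), 2 ≤ (a : ℕ) → (a : ℕ) ≤ n+2 → g a = f (p ((a : ℕ) - 2)) := by
    intro a h1 h2
    simp only [hg, if_neg (by omega : ¬((a:ℕ) = 0)), if_neg (by omega : ¬((a:ℕ) = 1)),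
      if_neg (by omega : ¬((a:ℕ) = n+3)), if_neg (by omega : ¬((a:ℕ) = n+4))]
  have zone : ∀ a : Fin (n+5), (a : ℕ) = 0 ∨ (a : ℕ) = 1 ∨ (a : ℕ) = n+3 ∨ (a : ℕ) = n+4 ∨
      (2 ≤ (a : ℕ) ∧ (a : ℕ) ≤ n+2) := by
    intro a; have := a.isLt; omega
  have key : ∀ a c : Fin (n+5),
      (((a : ℕ) = 0 ∧ (c : ℕ) = 2) ∨ ((a : ℕ) = 1 ∧ (c : ℕ) = 2) ∨
      (2 ≤ (a : ℕ) ∧ (a : ℕ) < n + 2 ∧ (c : ℕ) = (a : ℕ) + 1) ∨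
      ((a : ℕ) = n + 2 ∧ (c : ℕ) = n + 3) ∨ ((a : ℕ) = n + 2 ∧ (c : ℕ) = n + 4)) →
      G.Adj (g a) (g c) := by
    rintro a c (⟨ha, hc⟩ | ⟨ha, hc⟩ | ⟨ha1, ha2, hc⟩ | ⟨ha, hc⟩ | ⟨ha, hc⟩)
    · rw [hg0 a ha, hgp c (by omega) (by omega)]
      have : (c : ℕ) - 2 = 0 := by omega
      rw [this, C1]
      exact hadj.symm
    · rw [hg1 a ha, hgp c (by omega) (by omega)]
      have : (c : ℕ) - 2 = 0 := by omega
      rw [this, C1]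
      exact (f.map_adj C2).symm
    · rw [hgp a (by omega) (by omega), hgp c (by omega) (by omega)]
      have h3 : (c : ℕ) - 2 = ((a : ℕ) - 2) + 1 := by omega
      rw [h3]
      exact f.map_adj (C3 _ (by omega))
    · rw [hgp a (by omega) (by omega), hgd c hc]
      have h3 : (a : ℕ) - 2 = n := by omega
      rw [h3]
      exact f.map_adj C4
    · rw [hgp a (by omega) (by omega), hge c hc]
      have h3 : (a : ℕ) - 2 = n := by omega
      rw [h3]
      exact f.map_adj C5
  refine ⟨⟨g, ?_⟩, ?_⟩
  · intro a c hac
    rw [Bridge, fromRel_adj] at hac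
    obtain ⟨-, h | h⟩ := hac
    · exact key a c h
    · exact (key c a h).symm
  intro a c hac
  show a = c
  have hgac : g a = g c := hac
  have pinj : ∀ i j, i ≤ n → j ≤ n → f (p i) = f (p j) → i = j := fun i j hi hj h =>
    C6 i j hi hj (hf h)
  have fne : ∀ x z : GV n ε, x ≠ z → f x ≠ f z := fun x z hxz h => hxz (hf h)
  rcases zone a with ha | ha | ha | ha | ⟨ha1, ha2⟩ <;>
    rcases zone c with hc | hc | hc | hc | ⟨hc1, hc2⟩
  all_goals first
    | (exact Fin.ext (by omega))
    | (exfalso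
       first
       | (rw [hg0 a ha] at hgac
          first
          | (rw [hg1 c hc] at hgac; exact hyne b (Or.inl rfl) hgac)
          | (rw [hgd c hc] at hgac; exact hyne d (Or.inr (Or.inl rfl)) hgac)
          | (rw [hge c hc] at hgac; exact hyne e (Or.inr (Or.inr (Or.inl rfl))) hgac)
          | (rw [hgp c (by omega) (by omega)] at hgac
             exact hyne (p ((c:ℕ)-2)) (Or.inr (Or.inr (Or.inr ⟨(c:ℕ)-2, by omega, rfl⟩))) hgac))
       | (rw [hg0 c hc] at hgac
          first
          | (rw [hg1 a ha] at hgac; exact hyne b (Or.inl rfl) hgac.symm)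
          | (rw [hgd a ha] at hgac; exact hyne d (Or.inr (Or.inl rfl)) hgac.symm)
          | (rw [hge a ha] at hgac; exact hyne e (Or.inr (Or.inr (Or.inl rfl))) hgac.symm)
          | (rw [hgp a (by omega) (by omega)] at hgac
             exact hyne (p ((a:ℕ)-2)) (Or.inr (Or.inr (Or.inr ⟨(a:ℕ)-2, by omega, rfl⟩))) hgac.symm))
       | (rw [hg1 a ha] at hgac
          first
          | (rw [hgd c hc] at hgac; exact (C8.1 (hf hgac)).elim)
          | (rw [hge c hc] at hgac; exact (C8.2.1 (hf hgac)).elim)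
          | (rw [hgp c (by omega) (by omega)] at hgac
             exact ((C7 ((c:ℕ)-2) (by omega)).1 (hf hgac)).elim))
       | (rw [hg1 c hc] at hgac
          first
          | (rw [hgd a ha] at hgac; exact (C8.1 (hf hgac.symm)).elim)
          | (rw [hge a ha] at hgac; exact (C8.2.1 (hf hgac.symm)).elim)
          | (rw [hgp a (by omega) (by omega)] at hgac
             exact ((C7 ((a:ℕ)-2) (by omega)).1 (hf hgac.symm)).elim))
       | (rw [hgd a ha] at hgac
          first
          | (rw [hge c hc] at hgac; exact (C8.2.2 (hf hgac)).elim)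
          | (rw [hgp c (by omega) (by omega)] at hgac
             exact ((C7 ((c:ℕ)-2) (by omega)).2.1 (hf hgac)).elim))
       | (rw [hgd c hc] at hgac
          first
          | (rw [hge a ha] at hgac; exact (C8.2.2 (hf hgac.symm)).elim)
          | (rw [hgp a (by omega) (by omega)] at hgac
             exact ((C7 ((a:ℕ)-2) (by omega)).2.1 (hf hgac.symm)).elim))
       | (rw [hge a ha] at hgac
          rw [hgp c (by omega) (by omega)] at hgac
          exact ((C7 ((c:ℕ)-2) (by omega)).2.2 (hf hgac)).elim)
       | (rw [hge c hc] at hgac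
          rw [hgp a (by omega) (by omega)] at hgac
          exact ((C7 ((a:ℕ)-2) (by omega)).2.2 (hf hgac.symm)).elim))
    | (rw [hgp a (by omega) (by omega), hgp c (by omega) (by omega)] at hgac
       have := pinj _ _ (by omega) (by omega) hgac
       exact Fin.ext (by omega))
end Frame
end BB
namespace BB
open SimpleGraph

/-- swap two naturals -/
def sw (a b x : ℕ) : ℕ := if x = a then b else if x = b then a else x

lemma sw_lt {N a b x : ℕ} (ha : a < N) (hb : b < N) (hx : x < N) : sw a b x < N := by
  unfold sw; split_ifs <;> omega

lemma sw_inj {a b x y : ℕ} (h : sw a b x = sw a b y) : x = y := by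
  unfold sw at h; split_ifs at h <;> omega

lemma sw_left (a b : ℕ) : sw a b a = b := by simp [sw]

lemma sw_right (a b : ℕ) : sw a b b = a := by unfold sw; split_ifs <;> omega

lemma sw_other {a b x : ℕ} (h1 : x ≠ a) (h2 : x ≠ b) : sw a b x = x := by
  unfold sw; split_ifs <;> omega

section Easy
variable {n : ℕ} {ε : ℕ → Bool} (hn : 1 ≤ n)
set_option linter.unusedSectionVars false

include hn in
/-- configuration rooted at `q₀` of dead end `(m,i)`; fully unconditional. -/
lemma conf_q0 {m i : ℕ} (hi : i < n) (S : Set (GV n ε))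
    (hSv : ∀ w ∈ S, ¬ (GEps n ε).Adj (v2 n ε m i (n+2)) w ∧ w ≠ v2 n ε m i (n+2)) :
    Conf n ε (v2 n ε m i (n+2)) S := by
  refine ⟨v2 n ε m i (n+3), v2 n ε m i n, v2 n ε m i (n+1),
    fun j => v2 n ε m i (if j = 0 then n+2 else j-1), ?_, ?_, ?_, ?_, ?_, ?_, ?_, ?_, ?_⟩
  · simp
  · exact adj22P hn hi (by omega) rfl (by omega)
  · intro j hj
    dsimp only
    by_cases h0 : j = 0
    · subst h0
      rw [if_pos rfl, if_neg (by omega)]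
      exact adj22K hn hi (by omega) (by omega) (by omega)
    · rw [if_neg h0, if_neg (by omega)]
      exact adj22K hn hi (by omega) (by omega) (by omega)
  · dsimp only
    rw [if_neg (by omega : ¬(n = 0))]
    exact adj22K hn hi (by omega) (by omega) (by omega)
  · dsimp only
    rw [if_neg (by omega : ¬(n = 0))]
    exact adj22K hn hi (by omega) (by omega) (by omega)
  · intro a c ha hc h
    dsimp only at h
    have hba : (if a = 0 then n+2 else a-1) < 2*n+3 := by split_ifs <;> omega
    have hbc : (if c = 0 then n+2 else c-1) < 2*n+3 := by split_ifs <;> omega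
    rw [e22 hn hi hi hba hbc] at h
    obtain ⟨-, -, h⟩ := h
    revert h; split_ifs <;> omega
  · intro a ha
    dsimp only
    have hba : (if a = 0 then n+2 else a-1) < 2*n+3 := by split_ifs <;> omega
    refine ⟨?_, ?_, ?_⟩ <;>
      (intro h; rw [e22 hn hi hi (by omega) hba] at h; obtain ⟨-, -, h⟩ := h;
       revert h; split_ifs <;> omega)
  · refine ⟨?_, ?_, ?_⟩ <;> (intro h; rw [e22 hn hi hi (by omega) (by omega)] at h; omega)
  · intro w hw
    obtain ⟨hnadj, hne⟩ := hSv w hw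
    refine ⟨?_, ?_, ?_, ?_⟩
    · intro h; exact hnadj (h ▸ adj22P hn hi (by omega) rfl (by omega))
    · intro h; exact hnadj (h ▸ adj22K hn hi (by omega) (by omega) (by omega))
    · intro h; exact hnadj (h ▸ adj22K hn hi (by omega) (by omega) (by omega))
    · intro a ha h
      dsimp only at h
      by_cases h0 : a = 0
      · subst h0; rw [if_pos rfl] at h; exact hne h
      · rw [if_neg h0] at h
        exact hnadj (h ▸ adj22K hn hi (by omega) (by omega) (by omega))

include hn in
/-- configuration rooted at `p₀` of the dead end `D`; fully unconditional. -/
lemma conf_p0 (S : Set (GV n ε))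
    (hSv : ∀ w ∈ S, ¬ (GEps n ε).Adj (v0 n ε (n+2)) w ∧ w ≠ v0 n ε (n+2)) :
    Conf n ε (v0 n ε (n+2)) S := by
  refine ⟨v0 n ε (n+3), v0 n ε n, v0 n ε (n+1),
    fun j => v0 n ε (if j = 0 then n+2 else j-1), ?_, ?_, ?_, ?_, ?_, ?_, ?_, ?_, ?_⟩
  · simp
  · exact adj00P (by omega) rfl (by omega)
  · intro j hj
    dsimp only
    by_cases h0 : j = 0
    · subst h0
      rw [if_pos rfl, if_neg (by omega)]
      exact adj00K (by omega) (by omega) (by omega)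
    · rw [if_neg h0, if_neg (by omega)]
      exact adj00K (by omega) (by omega) (by omega)
  · dsimp only
    rw [if_neg (by omega : ¬(n = 0))]
    exact adj00K (by omega) (by omega) (by omega)
  · dsimp only
    rw [if_neg (by omega : ¬(n = 0))]
    exact adj00K (by omega) (by omega) (by omega)
  · intro a c ha hc h
    dsimp only at h
    have hba : (if a = 0 then n+2 else a-1) < 2*n+4 := by split_ifs <;> omega
    have hbc : (if c = 0 then n+2 else c-1) < 2*n+4 := by split_ifs <;> omega
    rw [e00 hba hbc] at h
    revert h; split_ifs <;> omega
  · intro a ha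
    dsimp only
    have hba : (if a = 0 then n+2 else a-1) < 2*n+4 := by split_ifs <;> omega
    refine ⟨?_, ?_, ?_⟩ <;>
      (intro h; rw [e00 (by omega) hba] at h; revert h; split_ifs <;> omega)
  · refine ⟨?_, ?_, ?_⟩ <;> (intro h; rw [e00 (by omega) (by omega)] at h; omega)
  · intro w hw
    obtain ⟨hnadj, hne⟩ := hSv w hw
    refine ⟨?_, ?_, ?_, ?_⟩
    · intro h; exact hnadj (h ▸ adj00P (by omega) rfl (by omega))
    · intro h; exact hnadj (h ▸ adj00K (by omega) (by omega) (by omega))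
    · intro h; exact hnadj (h ▸ adj00K (by omega) (by omega) (by omega))
    · intro a ha h
      dsimp only at h
      by_cases h0 : a = 0
      · subst h0; rw [if_pos rfl] at h; exact hne h
      · rw [if_neg h0] at h
        exact hnadj (h ▸ adj00K (by omega) (by omega) (by omega))

end Easy
end BB
namespace BB
open SimpleGraph

/-- the classes of vertices at which a configuration exists avoiding any single
non-neighbour: the `K_{n+2}`-vertices, the dead-end-path vertices `q₀,…,q_n`,
and the `D`-path vertices `p₀,…,p_n`. -/
def Uncond (n : ℕ) (ε : ℕ → Bool) (w : GV n ε) : Prop :=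
  (∃ m i, i < n+2 ∧ w = v1 n ε m i) ∨
  (∃ m i x, i < n ∧ n+2 ≤ x ∧ x ≤ 2*n+2 ∧ w = v2 n ε m i x) ∨
  (∃ x, n+2 ≤ x ∧ x ≤ 2*n+2 ∧ w = v0 n ε x)

section Easy2
variable {n : ℕ} {ε : ℕ → Bool} (hn : 1 ≤ n)
set_option linter.unusedSectionVars false

include hn in
/-- configuration rooted at an interior vertex of the `K_{n+3}` of dead end `(m,i)`. -/
lemma conf_kint {m i y : ℕ} (hi : i < n) (hy : y < n+2) (S : Set (GV n ε))
    (hSv : ∀ w ∈ S, ¬ (GEps n ε).Adj (v2 n ε m i y) w ∧ w ≠ v2 n ε m i y)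
    (hT : ∀ w ∈ S, ¬ Uncond n ε w) :
    Conf n ε (v2 n ε m i y) S := by
  have sB : ∀ t, t ≤ n+1 → sw 0 y t < n+2 := fun t ht => sw_lt (by omega) hy (by omega)
  have hyne : ∀ t, t ≠ 0 → y ≠ sw 0 y t :=
    fun t ht h => ht (sw_inj ((sw_left 0 y).trans h)).symm
  refine ⟨v2 n ε m i (sw 0 y (n+1)), v2 n ε m i (n+3), v2 n ε m i (sw 0 y n),
    fun j => v2 n ε m i (if j = n then n+2 else sw 0 y j), ?_, ?_, ?_, ?_, ?_, ?_, ?_, ?_, ?_⟩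
  · dsimp only
    rw [if_neg (by omega), sw_left]
  · exact adj22K hn hi (by omega) (by have := sB (n+1) (by omega); omega)
      (hyne (n+1) (by omega))
  · intro j hj
    dsimp only
    by_cases hj1 : j + 1 = n
    · rw [if_neg (by omega), if_pos hj1]
      exact adj22K hn hi (by have := sB j (by omega); omega) (by omega)
        (by have := sB j (by omega); omega)
    · rw [if_neg (by omega), if_neg hj1]
      refine adj22K hn hi (by have := sB j (by omega); omega)
        (by have := sB (j+1) (by omega); omega) (fun h => ?_)
      exact absurd (sw_inj h) (by omega)
  · dsimp only
    rw [if_pos rfl]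
    exact adj22P hn hi (by omega) rfl (by omega)
  · dsimp only
    rw [if_pos rfl]
    exact adj22K hn hi (by omega) (by have := sB n (by omega); omega)
      (by have := sB n (by omega); omega)
  · intro a c ha hc h
    dsimp only at h
    have hba : (if a = n then n+2 else sw 0 y a) < 2*n+3 := by
      split_ifs with h1
      · omega
      · have := sB a (by omega); omega
    have hbc : (if c = n then n+2 else sw 0 y c) < 2*n+3 := by
      split_ifs with h1
      · omega
      · have := sB c (by omega); omega
    rw [e22 hn hi hi hba hbc] at h
    obtain ⟨-, -, h⟩ := h
    by_cases ha' : a = n <;> by_cases hc' : c = n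
    · omega
    · rw [if_pos ha', if_neg hc'] at h
      have := sB c (by omega); omega
    · rw [if_neg ha', if_pos hc'] at h
      have := sB a (by omega); omega
    · rw [if_neg ha', if_neg hc'] at h
      exact sw_inj h
  · intro a ha
    dsimp only
    have hba : (if a = n then n+2 else sw 0 y a) < 2*n+3 := by
      split_ifs with h1
      · omega
      · have := sB a (by omega); omega
    refine ⟨?_, ?_, ?_⟩
    · intro h
      rw [e22 hn hi hi (by have := sB (n+1) (by omega); omega) hba] at h
      obtain ⟨-, -, h⟩ := h
      by_cases ha' : a = n
      · rw [if_pos ha'] at h; have := sB (n+1) (by omega); omega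
      · rw [if_neg ha'] at h; have := sw_inj h; omega
    · intro h
      rw [e22 hn hi hi (by omega) hba] at h
      obtain ⟨-, -, h⟩ := h
      by_cases ha' : a = n
      · rw [if_pos ha'] at h; omega
      · rw [if_neg ha'] at h; have := sB a (by omega); omega
    · intro h
      rw [e22 hn hi hi (by have := sB n (by omega); omega) hba] at h
      obtain ⟨-, -, h⟩ := h
      by_cases ha' : a = n
      · rw [if_pos ha'] at h; have := sB n (by omega); omega
      · rw [if_neg ha'] at h; have := sw_inj h; omega
  · refine ⟨?_, ?_, ?_⟩
    · intro h
      rw [e22 hn hi hi (by have := sB (n+1) (by omega); omega) (by omega)] at h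
      have := sB (n+1) (by omega); omega
    · intro h
      rw [e22 hn hi hi (by have := sB (n+1) (by omega); omega)
        (by have := sB n (by omega); omega)] at h
      obtain ⟨-, -, h⟩ := h
      have := sw_inj h; omega
    · intro h
      rw [e22 hn hi hi (by omega) (by have := sB n (by omega); omega)] at h
      have := sB n (by omega); omega
  · intro w hw
    obtain ⟨hnadj, hne⟩ := hSv w hw
    have hTw := hT w hw
    refine ⟨?_, ?_, ?_, ?_⟩
    · intro h
      exact hnadj (h ▸ adj22K hn hi (by omega) (by have := sB (n+1) (by omega); omega)
        (hyne (n+1) (by omega)))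
    · intro h
      exact hTw (Or.inr (Or.inl ⟨m, i, n+3, hi, by omega, by omega, h⟩))
    · intro h
      exact hnadj (h ▸ adj22K hn hi (by omega) (by have := sB n (by omega); omega)
        (hyne n (by omega)))
    · intro a ha h
      dsimp only at h
      by_cases ha' : a = n
      · rw [if_pos ha'] at h
        exact hTw (Or.inr (Or.inl ⟨m, i, n+2, hi, by omega, by omega, h⟩))
      · rw [if_neg ha'] at h
        by_cases ha0 : a = 0
        · subst ha0
          rw [sw_left] at h
          exact hne h
        · exact hnadj (h ▸ adj22K hn hi (by omega) (by have := sB a (by omega); omega)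
            (hyne a ha0))

include hn in
/-- configuration rooted at an interior vertex of the `K_{n+3}` of the dead end `D`. -/
lemma conf_dint {y : ℕ} (hy : y < n+2) (S : Set (GV n ε))
    (hSv : ∀ w ∈ S, ¬ (GEps n ε).Adj (v0 n ε y) w ∧ w ≠ v0 n ε y)
    (hT : ∀ w ∈ S, ¬ Uncond n ε w) :
    Conf n ε (v0 n ε y) S := by
  have sB : ∀ t, t ≤ n+1 → sw 0 y t < n+2 := fun t ht => sw_lt (by omega) hy (by omega)
  have hyne : ∀ t, t ≠ 0 → y ≠ sw 0 y t :=
    fun t ht h => ht (sw_inj ((sw_left 0 y).trans h)).symm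
  refine ⟨v0 n ε (sw 0 y (n+1)), v0 n ε (n+3), v0 n ε (sw 0 y n),
    fun j => v0 n ε (if j = n then n+2 else sw 0 y j), ?_, ?_, ?_, ?_, ?_, ?_, ?_, ?_, ?_⟩
  · dsimp only
    rw [if_neg (by omega), sw_left]
  · exact adj00K (by omega) (by have := sB (n+1) (by omega); omega) (hyne (n+1) (by omega))
  · intro j hj
    dsimp only
    by_cases hj1 : j + 1 = n
    · rw [if_neg (by omega), if_pos hj1]
      exact adj00K (by have := sB j (by omega); omega) (by omega)
        (by have := sB j (by omega); omega)
    · rw [if_neg (by omega), if_neg hj1]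
      refine adj00K (by have := sB j (by omega); omega)
        (by have := sB (j+1) (by omega); omega) (fun h => ?_)
      exact absurd (sw_inj h) (by omega)
  · dsimp only
    rw [if_pos rfl]
    exact adj00P (by omega) rfl (by omega)
  · dsimp only
    rw [if_pos rfl]
    exact adj00K (by omega) (by have := sB n (by omega); omega)
      (by have := sB n (by omega); omega)
  · intro a c ha hc h
    dsimp only at h
    have hba : (if a = n then n+2 else sw 0 y a) < 2*n+4 := by
      split_ifs with h1
      · omega
      · have := sB a (by omega); omega
    have hbc : (if c = n then n+2 else sw 0 y c) < 2*n+4 := by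
      split_ifs with h1
      · omega
      · have := sB c (by omega); omega
    rw [e00 hba hbc] at h
    by_cases ha' : a = n <;> by_cases hc' : c = n
    · omega
    · rw [if_pos ha', if_neg hc'] at h
      have := sB c (by omega); omega
    · rw [if_neg ha', if_pos hc'] at h
      have := sB a (by omega); omega
    · rw [if_neg ha', if_neg hc'] at h
      exact sw_inj h
  · intro a ha
    dsimp only
    have hba : (if a = n then n+2 else sw 0 y a) < 2*n+4 := by
      split_ifs with h1
      · omega
      · have := sB a (by omega); omega
    refine ⟨?_, ?_, ?_⟩
    · intro h
      rw [e00 (by have := sB (n+1) (by omega); omega) hba] at h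
      by_cases ha' : a = n
      · rw [if_pos ha'] at h; have := sB (n+1) (by omega); omega
      · rw [if_neg ha'] at h; have := sw_inj h; omega
    · intro h
      rw [e00 (by omega) hba] at h
      by_cases ha' : a = n
      · rw [if_pos ha'] at h; omega
      · rw [if_neg ha'] at h; have := sB a (by omega); omega
    · intro h
      rw [e00 (by have := sB n (by omega); omega) hba] at h
      by_cases ha' : a = n
      · rw [if_pos ha'] at h; have := sB n (by omega); omega
      · rw [if_neg ha'] at h; have := sw_inj h; omega
  · refine ⟨?_, ?_, ?_⟩
    · intro h
      rw [e00 (by have := sB (n+1) (by omega); omega) (by omega)] at h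
      have := sB (n+1) (by omega); omega
    · intro h
      rw [e00 (by have := sB (n+1) (by omega); omega) (by have := sB n (by omega); omega)] at h
      have := sw_inj h; omega
    · intro h
      rw [e00 (by omega) (by have := sB n (by omega); omega)] at h
      have := sB n (by omega); omega
  · intro w hw
    obtain ⟨hnadj, hne⟩ := hSv w hw
    have hTw := hT w hw
    refine ⟨?_, ?_, ?_, ?_⟩
    · intro h
      exact hnadj (h ▸ adj00K (by omega) (by have := sB (n+1) (by omega); omega)
        (hyne (n+1) (by omega)))
    · intro h
      exact hTw (Or.inr (Or.inr ⟨n+3, by omega, by omega, h⟩))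
    · intro h
      exact hnadj (h ▸ adj00K (by omega) (by have := sB n (by omega); omega)
        (hyne n (by omega)))
    · intro a ha h
      dsimp only at h
      by_cases ha' : a = n
      · rw [if_pos ha'] at h
        exact hTw (Or.inr (Or.inr ⟨n+2, by omega, by omega, h⟩))
      · rw [if_neg ha'] at h
        by_cases ha0 : a = 0
        · subst ha0
          rw [sw_left] at h
          exact hne h
        · exact hnadj (h ▸ adj00K (by omega) (by have := sB a (by omega); omega) (hyne a ha0))

include hn in
/-- configuration rooted at the vertex `l⁰ = p_{n+1}` of the dead end `D`. -/
lemma conf_l0 (S : Set (GV n ε))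
    (hSv : ∀ w ∈ S, ¬ (GEps n ε).Adj (v0 n ε (2*n+3)) w ∧ w ≠ v0 n ε (2*n+3))
    (hT : ∀ w ∈ S, ¬ Uncond n ε w) :
    Conf n ε (v0 n ε (2*n+3)) S := by
  refine ⟨v0 n ε (2*n+2), v1 n ε 0 n, v1 n ε 0 (n+1),
    fun j => if j = 0 then v0 n ε (2*n+3) else v1 n ε 0 (j-1), ?_, ?_, ?_, ?_, ?_, ?_, ?_, ?_, ?_⟩
  · simp
  · exact (adj00P (by omega) rfl (by omega)).symm
  · intro j hj
    dsimp only
    by_cases h0 : j = 0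
    · subst h0
      rw [if_pos rfl, if_neg (by omega)]
      exact adj0k hn
    · rw [if_neg h0, if_neg (by omega)]
      exact adjkk (by omega) (by omega) (by omega)
  · dsimp only
    rw [if_neg (by omega)]
    exact adjkk (by omega) (by omega) (by omega)
  · dsimp only
    rw [if_neg (by omega)]
    exact adjkk (by omega) (by omega) (by omega)
  · intro a c ha hc h
    dsimp only at h
    by_cases ha' : a = 0 <;> by_cases hc' : c = 0
    · omega
    · rw [if_pos ha', if_neg hc'] at h
      exact absurd h (ne01 hn)
    · rw [if_neg ha', if_pos hc'] at h
      exact absurd h.symm (ne01 hn)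
    · rw [if_neg ha', if_neg hc'] at h
      rw [e11 (by omega) (by omega)] at h
      omega
  · intro a ha
    dsimp only
    refine ⟨?_, ?_, ?_⟩
    · intro h
      by_cases ha' : a = 0
      · rw [if_pos ha'] at h
        rw [e00 (by omega) (by omega)] at h
        omega
      · rw [if_neg ha'] at h
        exact ne01 hn h
    · intro h
      by_cases ha' : a = 0
      · rw [if_pos ha'] at h
        exact ne01 hn h.symm
      · rw [if_neg ha'] at h
        rw [e11 (by omega) (by omega)] at h
        omega
    · intro h
      by_cases ha' : a = 0
      · rw [if_pos ha'] at h
        exact ne01 hn h.symm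
      · rw [if_neg ha'] at h
        rw [e11 (by omega) (by omega)] at h
        omega
  · refine ⟨ne01 hn, ne01 hn, ?_⟩
    intro h
    rw [e11 (by omega) (by omega)] at h
    omega
  · intro w hw
    obtain ⟨hnadj, hne⟩ := hSv w hw
    have hTw := hT w hw
    refine ⟨?_, ?_, ?_, ?_⟩
    · intro h
      exact hnadj (h ▸ (adj00P (by omega) rfl (by omega)).symm)
    · intro h
      exact hTw (Or.inl ⟨0, n, by omega, h⟩)
    · intro h
      exact hTw (Or.inl ⟨0, n+1, by omega, h⟩)
    · intro a ha h
      dsimp only at h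
      by_cases ha' : a = 0
      · rw [if_pos ha'] at h
        exact hne h
      · rw [if_neg ha'] at h
        exact hTw (Or.inl ⟨0, a-1, by omega, h⟩)

end Easy2
end BB
namespace BB
open SimpleGraph

lemma sw_invol (a b x : ℕ) : sw a b (sw a b x) = x := by
  unfold sw; split_ifs <;> omega

section ConfK
variable {n : ℕ} {ε : ℕ → Bool} (hn : 1 ≤ n)
set_option linter.unusedSectionVars false

include hn in
/-- configuration rooted at a vertex of the `K_{n+2}` of `T(m)`, avoiding any
subsingleton set of non-neighbours. -/
lemma conf_k {m i : ℕ} (hi : i < n+2) (S : Set (GV n ε)) (hS : S.Subsingleton)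
    (hSv : ∀ w ∈ S, ¬ (GEps n ε).Adj (v1 n ε m i) w ∧ w ≠ v1 n ε m i) :
    Conf n ε (v1 n ε m i) S := by
  set lm : GV n ε := if m = 0 then v0 n ε (2*n+3) else v3 n ε (m-1) (n + (ε (m-1)).toNat - 1)
    with hlm
  have hlm_adj : (GEps n ε).Adj lm (v1 n ε m 0) := by
    by_cases hm : m = 0
    · rw [hlm, if_pos hm, hm]
      exact adj0k hn
    · rw [hlm, if_neg hm]
      have h := adj3l hn (m := m-1) (c := n + (ε (m-1)).toNat - 1) rfl
      rwa [show m-1+1 = m by omega] at h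
  have hlm_ne_v1 : ∀ m' j : ℕ, lm ≠ v1 n ε m' j := by
    intro m' j
    by_cases hm : m = 0
    · rw [hlm, if_pos hm]; exact ne01 hn
    · rw [hlm, if_neg hm]; exact fun h => ne13 hn h.symm
  have hlm_ne_r : lm ≠ v3 n ε m 0 := by
    by_cases hm : m = 0
    · rw [hlm, if_pos hm]; exact ne03 hn
    · rw [hlm, if_neg hm]
      intro h
      rw [e33 (by omega) (by omega)] at h
      omega
  have hlm_ne_v2 : ∀ m' i' x', lm ≠ v2 n ε m' i' x' := by
    intro m' i' x'
    by_cases hm : m = 0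
    · rw [hlm, if_pos hm]; exact ne02 hn
    · rw [hlm, if_neg hm]; exact fun h => ne23 hn h.symm
  -- the pendant neighbour b
  set b : GV n ε := if i = 0 then lm else if i = n+1 then v3 n ε m 0
    else v2 n ε m (i-1) (2*n+2) with hb
  have hb_adj : (GEps n ε).Adj (v1 n ε m i) b := by
    by_cases h0 : i = 0
    · rw [hb, if_pos h0, h0]
      exact hlm_adj.symm
    · by_cases h1 : i = n+1
      · rw [hb, if_neg h0, if_pos h1, h1]
        exact adjkr hn
      · rw [hb, if_neg h0, if_neg h1]
        have h := (adj2k (n := n) (ε := ε) hn (m := m) (i := i-1) (by omega)).symm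
        rwa [show i-1+1 = i by omega] at h
  have hb_ne_v1 : ∀ j : ℕ, b ≠ v1 n ε m j := by
    intro j
    by_cases h0 : i = 0
    · rw [hb, if_pos h0]; exact hlm_ne_v1 m j
    · by_cases h1 : i = n+1
      · rw [hb, if_neg h0, if_pos h1]; exact fun h => ne13 hn h.symm
      · rw [hb, if_neg h0, if_neg h1]; exact fun h => ne12 hn h.symm
  -- the generic construction, given a suitable far endpoint w with risky spare r
  have key : ∀ (w : ℕ) (r : GV n ε), w < n+2 → w ≠ i →
      (GEps n ε).Adj (v1 n ε m w) r → r ∉ S → r ≠ b → (∀ j : ℕ, r ≠ v1 n ε m j) →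
      Conf n ε (v1 n ε m i) S := by
    intro w r hw hwi hr_adj hrS hrb hrv1
    set a : ℕ := sw 0 i w with ha
    have ha0 : a ≠ 0 := by rw [ha]; unfold sw; split_ifs <;> omega
    set π : ℕ → ℕ := fun j => sw 0 i (sw n a j) with hπ
    have hπlt : ∀ j, j < n+2 → π j < n+2 := by
      intro j hj
      rw [hπ]
      have : a < n+2 := by rw [ha]; exact sw_lt (by omega) hi hw
      exact sw_lt (by omega) hi (sw_lt (by omega) this hj)
    have hπinj : ∀ {j j'}, π j = π j' → j = j' := by
      intro j j' h
      rw [hπ] at h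
      exact sw_inj (sw_inj h)
    have hπ0 : π 0 = i := by
      rw [hπ]
      dsimp only
      rw [sw_other (by omega) (fun h => ha0 h.symm), sw_left]
    have hπn : π n = w := by
      rw [hπ]
      dsimp only
      rw [sw_left, ha, sw_invol]
    refine ⟨b, r, v1 n ε m (π (n+1)),
      fun j => v1 n ε m (π j), ?_, ?_, ?_, ?_, ?_, ?_, ?_, ?_, ?_⟩
    · dsimp only; rw [hπ0]
    · exact hb_adj
    · intro j hj
      dsimp only
      exact adjkk (hπlt j (by omega)) (hπlt (j+1) (by omega))
        (fun h => by have := hπinj h; omega)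
    · dsimp only
      rw [hπn]
      exact hr_adj
    · dsimp only
      rw [hπn]
      refine adjkk hw (hπlt (n+1) (by omega)) (fun h => ?_)
      rw [← hπn] at h
      have := hπinj h; omega
    · intro a' c ha' hc h
      dsimp only at h
      rw [e11 (hπlt a' (by omega)) (hπlt c (by omega))] at h
      exact hπinj h.2
    · intro a' ha'
      dsimp only
      refine ⟨hb_ne_v1 _, hrv1 _, fun h => ?_⟩
      rw [e11 (hπlt (n+1) (by omega)) (hπlt a' (by omega))] at h
      have := hπinj h.2; omega
    · exact ⟨fun h => hrb h.symm, hb_ne_v1 _, fun h => (hrv1 _) h⟩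
    · intro w' hw'
      obtain ⟨hnadj, hne⟩ := hSv w' hw'
      refine ⟨?_, ?_, ?_, ?_⟩
      · intro h; exact hnadj (h ▸ hb_adj)
      · intro h; exact hrS (h ▸ hw')
      · intro h
        refine hnadj (h ▸ adjkk hi (hπlt (n+1) (by omega)) (fun h' => ?_))
        rw [← hπ0] at h'
        have := hπinj h'; omega
      · intro a' ha' h
        dsimp only at h
        by_cases h0 : a' = 0
        · subst h0; rw [hπ0] at h; exact hne h
        · refine hnadj (h ▸ adjkk hi (hπlt a' (by omega)) (fun h' => ?_))
          rw [← hπ0] at h'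
          have := hπinj h'; omega
  -- candidate selection
  have hAC : v3 n ε m 0 ≠ v2 n ε m 0 (2*n+2) := fun h => ne23 hn h.symm
  have hBC : lm ≠ v2 n ε m 0 (2*n+2) := hlm_ne_v2 _ _ _
  have hCadj : (GEps n ε).Adj (v1 n ε m 1) (v2 n ε m 0 (2*n+2)) :=
    (adj2k hn (m := m) (i := 0) (by omega)).symm
  have hCv1 : ∀ j : ℕ, v2 n ε m 0 (2*n+2) ≠ v1 n ε m j := fun j h => ne12 hn h.symm
  have hAv1 : ∀ j : ℕ, v3 n ε m 0 ≠ v1 n ε m j := fun j h => ne13 hn h.symm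
  by_cases h0 : i = 0
  · by_cases hc : v3 n ε m 0 ∈ S
    · refine key 1 (v2 n ε m 0 (2*n+2)) (by omega) (by omega) hCadj
        (fun h2 => hAC (hS hc h2)) ?_ hCv1
      rw [hb, if_pos h0]
      exact fun h => hBC h.symm
    · refine key (n+1) (v3 n ε m 0) (by omega) (by omega) (adjkr hn) hc ?_ hAv1
      rw [hb, if_pos h0]
      exact fun h => hlm_ne_r h.symm
  · by_cases h1 : i = n+1
    · by_cases hc : lm ∈ S
      · refine key 1 (v2 n ε m 0 (2*n+2)) (by omega) (by omega) hCadj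
          (fun h2 => hBC (hS hc h2)) ?_ hCv1
        rw [hb, if_neg h0, if_pos h1]
        exact fun h => hAC h.symm
      · refine key 0 lm (by omega) (fun h => h0 h.symm) hlm_adj.symm hc ?_ (hlm_ne_v1 m)
        rw [hb, if_neg h0, if_pos h1]
        exact hlm_ne_r
    · by_cases hc : lm ∈ S
      · refine key (n+1) (v3 n ε m 0) (by omega) (by omega) (adjkr hn)
          (fun h2 => hlm_ne_r (hS hc h2)) ?_ hAv1
        rw [hb, if_neg h0, if_neg h1]
        exact fun h => ne23 hn h.symm
      · refine key 0 lm (by omega) (fun h => h0 h.symm) hlm_adj.symm hc ?_ (hlm_ne_v1 m)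
        rw [hb, if_neg h0, if_neg h1]
        exact hlm_ne_v2 _ _ _
end ConfK
end BB
namespace BB
open SimpleGraph
section ConfQ
variable {n : ℕ} {ε : ℕ → Bool} (hn : 1 ≤ n)
set_option linter.unusedSectionVars false

include hn in
/-- configuration rooted at a path vertex `q_s` (`1 ≤ s ≤ n`) of dead end `(m,i)`. -/
lemma conf_q {m i x : ℕ} (hi : i < n) (hx1 : n+3 ≤ x) (hx2 : x ≤ 2*n+2)
    (S : Set (GV n ε)) (hS : S.Subsingleton)
    (hSv : ∀ w ∈ S, ¬ (GEps n ε).Adj (v2 n ε m i x) w ∧ w ≠ v2 n ε m i x) :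
    Conf n ε (v2 n ε m i x) S := by
  have sB : ∀ t, t ≤ n+1 → sw 0 (i+1) t < n+2 := fun t ht => sw_lt (by omega) (by omega) (by omega)
  by_cases hup : ∃ w ∈ S, ∃ x', n+2 ≤ x' ∧ x'+2 ≤ x ∧ w = v2 n ε m i x'
  · -- route upwards through k_{i+1} into the K_{n+2}
    obtain ⟨w0, hw0S, x', hx'1, hx'2, hw0⟩ := hup
    refine ⟨v2 n ε m i (x-1), v1 n ε m (sw 0 (i+1) (x-(n+2))), v1 n ε m (sw 0 (i+1) (x-(n+2)+1)),
      fun j => if j ≤ 2*n+2-x then v2 n ε m i (x+j)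
        else v1 n ε m (sw 0 (i+1) (j-(2*n+3-x))), ?_, ?_, ?_, ?_, ?_, ?_, ?_, ?_, ?_⟩
    · dsimp only
      rw [if_pos (by omega)]
      rfl
    · exact (adj22P hn hi (by omega) (by omega) (by omega)).symm
    · intro j hj
      dsimp only
      by_cases hj1 : j+1 ≤ 2*n+2-x
      · rw [if_pos (by omega), if_pos hj1]
        exact adj22P hn hi (by omega) (by omega) (by omega)
      · by_cases hj2 : j ≤ 2*n+2-x
        · rw [if_pos hj2, if_neg hj1]
          have e1 : x+j = 2*n+2 := by omega
          have e2 : j+1-(2*n+3-x) = 0 := by omega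
          rw [e1, e2, sw_left]
          exact adj2k hn hi
        · rw [if_neg hj2, if_neg hj1]
          have e2 : j+1-(2*n+3-x) = (j-(2*n+3-x))+1 := by omega
          rw [e2]
          exact adjkk (sB _ (by omega)) (sB _ (by omega))
            (fun h => by have := sw_inj h; omega)
    · dsimp only
      rw [if_neg (by omega)]
      have e1 : n-(2*n+3-x) = x-(n+2)-1 := by omega
      rw [e1]
      exact adjkk (sB _ (by omega)) (sB _ (by omega)) (fun h => by have := sw_inj h; omega)
    · dsimp only
      rw [if_neg (by omega)]
      have e1 : n-(2*n+3-x) = x-(n+2)-1 := by omega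
      rw [e1]
      exact adjkk (sB _ (by omega)) (sB _ (by omega)) (fun h => by have := sw_inj h; omega)
    · intro a c ha hc h
      dsimp only at h
      by_cases ha' : a ≤ 2*n+2-x <;> by_cases hc' : c ≤ 2*n+2-x
      · rw [if_pos ha', if_pos hc'] at h
        rw [e22 hn hi hi (by omega) (by omega)] at h
        omega
      · rw [if_pos ha', if_neg hc'] at h
        exact absurd h.symm (ne12 hn)
      · rw [if_neg ha', if_pos hc'] at h
        exact absurd h (ne12 hn)
      · rw [if_neg ha', if_neg hc'] at h
        rw [e11 (sB _ (by omega)) (sB _ (by omega))] at h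
        have := sw_inj h.2
        omega
    · intro a ha
      dsimp only
      refine ⟨?_, ?_, ?_⟩
      · intro h
        by_cases ha' : a ≤ 2*n+2-x
        · rw [if_pos ha'] at h
          rw [e22 hn hi hi (by omega) (by omega)] at h
          omega
        · rw [if_neg ha'] at h
          exact ne12 hn h.symm
      · intro h
        by_cases ha' : a ≤ 2*n+2-x
        · rw [if_pos ha'] at h
          exact ne12 hn h
        · rw [if_neg ha'] at h
          rw [e11 (sB _ (by omega)) (sB _ (by omega))] at h
          have := sw_inj h.2
          omega
      · intro h
        by_cases ha' : a ≤ 2*n+2-x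
        · rw [if_pos ha'] at h
          exact ne12 hn h
        · rw [if_neg ha'] at h
          rw [e11 (sB _ (by omega)) (sB _ (by omega))] at h
          have := sw_inj h.2
          omega
    · refine ⟨fun h => ne12 hn h.symm, fun h => ne12 hn h.symm, fun h => ?_⟩
      rw [e11 (sB _ (by omega)) (sB _ (by omega))] at h
      have := sw_inj h.2
      omega
    · intro w hw
      have hww0 : w = w0 := hS hw hw0S
      rw [hww0, hw0]
      refine ⟨?_, fun h => ne12 hn h.symm, fun h => ne12 hn h.symm, ?_⟩
      · intro h
        rw [e22 hn hi hi (by omega) (by omega)] at h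
        omega
      · intro a ha h
        dsimp only at h
        by_cases ha' : a ≤ 2*n+2-x
        · rw [if_pos ha'] at h
          rw [e22 hn hi hi (by omega) (by omega)] at h
          omega
        · rw [if_neg ha'] at h
          exact ne12 hn h.symm
  · -- route downwards through q₀ into the K_{n+3} of the dead end
    push_neg at hup
    have key : ∀ z : ℕ, z < n+2 →
        (∀ w ∈ S, ∀ y, y ≤ n+2 → y ≠ z → w ≠ v2 n ε m i y) →
        Conf n ε (v2 n ε m i x) S := by
      intro z hzK hzS
      set jz : ℕ := sw 0 (n+2) z with hjz
      have hjz0 : jz ≠ 0 := by rw [hjz]; unfold sw; split_ifs <;> omega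
      have hjzlt : jz < n+3 := by rw [hjz]; exact sw_lt (by omega) (by omega) (by omega)
      set π : ℕ → ℕ := fun t => sw 0 (n+2) (sw jz (n+2) t) with hπ
      have hπlt : ∀ t, t ≤ n+2 → π t < n+3 := by
        intro t ht
        rw [hπ]
        exact sw_lt (by omega) (by omega) (sw_lt hjzlt (by omega) (by omega))
      have hπinj : ∀ {t t'}, π t = π t' → t = t' := by
        intro t t' h
        rw [hπ] at h
        exact sw_inj (sw_inj h)
      have hπ0 : π 0 = n+2 := by
        rw [hπ]
        dsimp only
        rw [sw_other (fun h => hjz0 h.symm) (by omega), sw_left]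
      have hπtop : π (n+2) = z := by
        rw [hπ]
        dsimp only
        rw [sw_right, hjz, sw_invol]
      have hπne_z : ∀ t, t ≤ n+1 → π t ≠ z := by
        intro t ht h
        rw [← hπtop] at h
        have := hπinj h
        omega
      refine ⟨if x = 2*n+2 then v1 n ε m (i+1) else v2 n ε m i (x+1),
        v2 n ε m i (π (n-(x-(n+2))+1)), v2 n ε m i (π (n-(x-(n+2))+2)),
        fun j => if j < x-(n+2) then v2 n ε m i (x-j) else v2 n ε m i (π (j-(x-(n+2)))),
        ?_, ?_, ?_, ?_, ?_, ?_, ?_, ?_, ?_⟩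
      · dsimp only
        rw [if_pos (by omega)]
        rfl
      · by_cases hx' : x = 2*n+2
        · rw [if_pos hx', hx']
          exact adj2k hn hi
        · rw [if_neg hx']
          exact adj22P hn hi (by omega) rfl (by omega)
      · intro j hj
        dsimp only
        by_cases hj1 : j+1 < x-(n+2)
        · rw [if_pos (by omega), if_pos hj1]
          exact (adj22P hn hi (by omega) (by omega) (by omega)).symm
        · by_cases hj2 : j < x-(n+2)
          · rw [if_pos hj2, if_neg (by omega)]
            have e1 : x-j = n+3 := by omega
            have e2 : j+1-(x-(n+2)) = 0 := by omega
            rw [e1, e2, hπ0]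
            exact (adj22P hn hi (by omega) rfl (by omega)).symm
          · rw [if_neg hj2, if_neg (by omega)]
            have e2 : j+1-(x-(n+2)) = (j-(x-(n+2)))+1 := by omega
            rw [e2]
            exact adj22K hn hi (hπlt _ (by omega)) (hπlt _ (by omega))
              (fun h => by have := hπinj h; omega)
      · dsimp only
        rw [if_neg (by omega)]
        exact adj22K hn hi (hπlt _ (by omega)) (hπlt _ (by omega))
          (fun h => by have := hπinj h; omega)
      · dsimp only
        rw [if_neg (by omega)]
        exact adj22K hn hi (hπlt _ (by omega)) (hπlt _ (by omega))
          (fun h => by have := hπinj h; omega)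
      · intro a c ha hc h
        dsimp only at h
        by_cases ha' : a < x-(n+2) <;> by_cases hc' : c < x-(n+2)
        · rw [if_pos ha', if_pos hc'] at h
          rw [e22 hn hi hi (by omega) (by omega)] at h
          omega
        · rw [if_pos ha', if_neg hc'] at h
          rw [e22 hn hi hi (by omega) (by have := hπlt (c-(x-(n+2))) (by omega); omega)] at h
          have := hπlt (c-(x-(n+2))) (by omega)
          omega
        · rw [if_neg ha', if_pos hc'] at h
          rw [e22 hn hi hi (by have := hπlt (a-(x-(n+2))) (by omega); omega) (by omega)] at h
          have := hπlt (a-(x-(n+2))) (by omega)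
          omega
        · rw [if_neg ha', if_neg hc'] at h
          rw [e22 hn hi hi (by have := hπlt (a-(x-(n+2))) (by omega); omega)
            (by have := hπlt (c-(x-(n+2))) (by omega); omega)] at h
          have := hπinj h.2.2
          omega
      · intro a ha
        dsimp only
        have hπa : ∀ t, t ≤ n+2 → π t < n+3 := hπlt
        refine ⟨?_, ?_, ?_⟩
        · intro h
          by_cases hx' : x = 2*n+2
          · rw [if_pos hx'] at h
            by_cases ha' : a < x-(n+2)
            · rw [if_pos ha'] at h; exact ne12 hn h
            · rw [if_neg ha'] at h; exact ne12 hn h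
          · rw [if_neg hx'] at h
            by_cases ha' : a < x-(n+2)
            · rw [if_pos ha'] at h
              rw [e22 hn hi hi (by omega) (by omega)] at h
              omega
            · rw [if_neg ha'] at h
              rw [e22 hn hi hi (by omega) (by have := hπa (a-(x-(n+2))) (by omega); omega)] at h
              have := hπa (a-(x-(n+2))) (by omega)
              omega
        · intro h
          by_cases ha' : a < x-(n+2)
          · rw [if_pos ha'] at h
            rw [e22 hn hi hi (by have := hπa (n-(x-(n+2))+1) (by omega); omega) (by omega)] at h
            have := hπa (n-(x-(n+2))+1) (by omega)
            omega
          · rw [if_neg ha'] at h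
            rw [e22 hn hi hi (by have := hπa (n-(x-(n+2))+1) (by omega); omega)
              (by have := hπa (a-(x-(n+2))) (by omega); omega)] at h
            have := hπinj h.2.2
            omega
        · intro h
          by_cases ha' : a < x-(n+2)
          · rw [if_pos ha'] at h
            rw [e22 hn hi hi (by have := hπa (n-(x-(n+2))+2) (by omega); omega) (by omega)] at h
            have := hπa (n-(x-(n+2))+2) (by omega)
            omega
          · rw [if_neg ha'] at h
            rw [e22 hn hi hi (by have := hπa (n-(x-(n+2))+2) (by omega); omega)
              (by have := hπa (a-(x-(n+2))) (by omega); omega)] at h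
            have := hπinj h.2.2
            omega
      · refine ⟨?_, ?_, ?_⟩
        · intro h
          by_cases hx' : x = 2*n+2
          · rw [if_pos hx'] at h
            exact ne12 hn h
          · rw [if_neg hx'] at h
            rw [e22 hn hi hi (by omega) (by have := hπlt (n-(x-(n+2))+1) (by omega); omega)] at h
            have := hπlt (n-(x-(n+2))+1) (by omega)
            omega
        · intro h
          by_cases hx' : x = 2*n+2
          · rw [if_pos hx'] at h
            exact ne12 hn h
          · rw [if_neg hx'] at h
            rw [e22 hn hi hi (by omega) (by have := hπlt (n-(x-(n+2))+2) (by omega); omega)] at h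
            have := hπlt (n-(x-(n+2))+2) (by omega)
            omega
        · intro h
          rw [e22 hn hi hi (by have := hπlt (n-(x-(n+2))+1) (by omega); omega)
            (by have := hπlt (n-(x-(n+2))+2) (by omega); omega)] at h
          have := hπinj h.2.2
          omega
      · intro w hw
        obtain ⟨hnadj, hne⟩ := hSv w hw
        refine ⟨?_, ?_, ?_, ?_⟩
        · intro h
          by_cases hx' : x = 2*n+2
          · rw [if_pos hx'] at h
            refine hnadj (h ▸ ?_)
            have h2 := adj2k (n := n) (ε := ε) hn (m := m) (i := i) hi
            rwa [← hx'] at h2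
          · rw [if_neg hx'] at h
            exact hnadj (h ▸ adj22P hn hi (by omega) rfl (by omega))
        · exact hzS w hw (π (n-(x-(n+2))+1)) (by have := hπlt (n-(x-(n+2))+1) (by omega); omega)
            (hπne_z (n-(x-(n+2))+1) (by omega))
        · exact hzS w hw (π (n-(x-(n+2))+2)) (by have := hπlt (n-(x-(n+2))+2) (by omega); omega)
            (hπne_z (n-(x-(n+2))+2) (by omega))
        · intro a ha h
          dsimp only at h
          by_cases ha' : a < x-(n+2)
          · rw [if_pos ha'] at h
            by_cases ha0 : a = 0
            · subst ha0
              exact hne (by simpa using h)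
            · by_cases ha1 : a = 1
              · subst ha1
                exact hnadj (h ▸ (adj22P hn hi (by omega) (by omega) (by omega)).symm)
              · exact hup w hw (x-a) (by omega) (by omega) h
          · rw [if_neg ha'] at h
            exact hzS w hw (π (a-(x-(n+2)))) (by have := hπlt (a-(x-(n+2))) (by omega); omega)
              (hπne_z (a-(x-(n+2))) (by omega)) h
    by_cases hz : ∃ w ∈ S, ∃ y, y < n+2 ∧ w = v2 n ε m i y
    · obtain ⟨wz, hwzS, yz, hyz, hwz⟩ := hz
      refine key yz hyz ?_
      intro w hw y hy hyne h
      have : w = wz := hS hw hwzS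
      rw [this, hwz] at h
      rw [e22 hn hi hi (by omega) (by omega)] at h
      omega
    · refine key 0 (by omega) ?_
      intro w hw y hy hyne h
      by_cases hy' : y < n+2
      · exact hz ⟨w, hw, y, hy', h⟩
      · -- y = n+2, i.e. q₀
        have hy2 : y = n+2 := by omega
        subst hy2
        by_cases hs : x = n+3
        · obtain ⟨hnadj, -⟩ := hSv w hw
          exact hnadj (h ▸ (adj22P hn hi (by omega) (by omega) (by omega)).symm)
        · exact hup w hw (n+2) (by omega) (by omega) h
end ConfQ
end BB
namespace BB
open SimpleGraph
section ConfP
variable {n : ℕ} {ε : ℕ → Bool} (hn : 1 ≤ n)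
set_option linter.unusedSectionVars false

include hn in
/-- configuration rooted at a path vertex `p_s` (`1 ≤ s ≤ n`) of the dead end `D`. -/
lemma conf_p {x : ℕ} (hx1 : n+3 ≤ x) (hx2 : x ≤ 2*n+2)
    (S : Set (GV n ε)) (hS : S.Subsingleton)
    (hSv : ∀ w ∈ S, ¬ (GEps n ε).Adj (v0 n ε x) w ∧ w ≠ v0 n ε x) :
    Conf n ε (v0 n ε x) S := by
  by_cases hup : ∃ w ∈ S, ∃ x', n+2 ≤ x' ∧ x'+2 ≤ x ∧ w = v0 n ε x'
  · -- route upwards through l⁰ into the K_{n+2} of T(0)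
    obtain ⟨w0, hw0S, x', hx'1, hx'2, hw0⟩ := hup
    refine ⟨v0 n ε (x-1), v1 n ε 0 (x-(n+2)-1), v1 n ε 0 (x-(n+2)),
      fun j => if j ≤ 2*n+3-x then v0 n ε (x+j)
        else v1 n ε 0 (j-(2*n+4-x)), ?_, ?_, ?_, ?_, ?_, ?_, ?_, ?_, ?_⟩
    · dsimp only
      rw [if_pos (by omega)]
      rfl
    · exact (adj00P (by omega) (by omega) (by omega)).symm
    · intro j hj
      dsimp only
      by_cases hj1 : j+1 ≤ 2*n+3-x
      · rw [if_pos (by omega), if_pos hj1]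
        exact adj00P (by omega) (by omega) (by omega)
      · by_cases hj2 : j ≤ 2*n+3-x
        · rw [if_pos hj2, if_neg hj1]
          have e1 : x+j = 2*n+3 := by omega
          have e2 : j+1-(2*n+4-x) = 0 := by omega
          rw [e1, e2]
          exact adj0k hn
        · rw [if_neg hj2, if_neg hj1]
          have e2 : j+1-(2*n+4-x) = (j-(2*n+4-x))+1 := by omega
          rw [e2]
          exact adjkk (by omega) (by omega) (by omega)
    · dsimp only
      rw [if_neg (by omega)]
      exact adjkk (by omega) (by omega) (by omega)
    · dsimp only
      rw [if_neg (by omega)]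
      exact adjkk (by omega) (by omega) (by omega)
    · intro a c ha hc h
      dsimp only at h
      by_cases ha' : a ≤ 2*n+3-x <;> by_cases hc' : c ≤ 2*n+3-x
      · rw [if_pos ha', if_pos hc'] at h
        rw [e00 (by omega) (by omega)] at h
        omega
      · rw [if_pos ha', if_neg hc'] at h
        exact absurd h (ne01 hn)
      · rw [if_neg ha', if_pos hc'] at h
        exact absurd h.symm (ne01 hn)
      · rw [if_neg ha', if_neg hc'] at h
        rw [e11 (by omega) (by omega)] at h
        omega
    · intro a ha
      dsimp only
      refine ⟨?_, ?_, ?_⟩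
      · intro h
        by_cases ha' : a ≤ 2*n+3-x
        · rw [if_pos ha'] at h
          rw [e00 (by omega) (by omega)] at h
          omega
        · rw [if_neg ha'] at h
          exact ne01 hn h
      · intro h
        by_cases ha' : a ≤ 2*n+3-x
        · rw [if_pos ha'] at h
          exact ne01 hn h.symm
        · rw [if_neg ha'] at h
          rw [e11 (by omega) (by omega)] at h
          omega
      · intro h
        by_cases ha' : a ≤ 2*n+3-x
        · rw [if_pos ha'] at h
          exact ne01 hn h.symm
        · rw [if_neg ha'] at h
          rw [e11 (by omega) (by omega)] at h
          omega
    · refine ⟨ne01 hn, ne01 hn, fun h => ?_⟩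
      rw [e11 (by omega) (by omega)] at h
      omega
    · intro w hw
      have hww0 : w = w0 := hS hw hw0S
      rw [hww0, hw0]
      refine ⟨?_, fun h => ne01 hn h, fun h => ne01 hn h, ?_⟩
      · intro h
        rw [e00 (by omega) (by omega)] at h
        omega
      · intro a ha h
        dsimp only at h
        by_cases ha' : a ≤ 2*n+3-x
        · rw [if_pos ha'] at h
          rw [e00 (by omega) (by omega)] at h
          omega
        · rw [if_neg ha'] at h
          exact ne01 hn h
  · -- route downwards through p₀ into the K_{n+3} of D
    push_neg at hup
    have key : ∀ z : ℕ, z < n+2 →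
        (∀ w ∈ S, ∀ y, y ≤ n+2 → y ≠ z → w ≠ v0 n ε y) →
        Conf n ε (v0 n ε x) S := by
      intro z hzK hzS
      set jz : ℕ := sw 0 (n+2) z with hjz
      have hjz0 : jz ≠ 0 := by rw [hjz]; unfold sw; split_ifs <;> omega
      have hjzlt : jz < n+3 := by rw [hjz]; exact sw_lt (by omega) (by omega) (by omega)
      set π : ℕ → ℕ := fun t => sw 0 (n+2) (sw jz (n+2) t) with hπ
      have hπlt : ∀ t, t ≤ n+2 → π t < n+3 := by
        intro t ht
        rw [hπ]
        exact sw_lt (by omega) (by omega) (sw_lt hjzlt (by omega) (by omega))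
      have hπinj : ∀ {t t'}, π t = π t' → t = t' := by
        intro t t' h
        rw [hπ] at h
        exact sw_inj (sw_inj h)
      have hπ0 : π 0 = n+2 := by
        rw [hπ]
        dsimp only
        rw [sw_other (fun h => hjz0 h.symm) (by omega), sw_left]
      have hπtop : π (n+2) = z := by
        rw [hπ]
        dsimp only
        rw [sw_right, hjz, sw_invol]
      have hπne_z : ∀ t, t ≤ n+1 → π t ≠ z := by
        intro t ht h
        rw [← hπtop] at h
        have := hπinj h
        omega
      refine ⟨v0 n ε (x+1), v0 n ε (π (n-(x-(n+2))+1)), v0 n ε (π (n-(x-(n+2))+2)),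
        fun j => if j < x-(n+2) then v0 n ε (x-j) else v0 n ε (π (j-(x-(n+2)))),
        ?_, ?_, ?_, ?_, ?_, ?_, ?_, ?_, ?_⟩
      · dsimp only
        rw [if_pos (by omega)]
        rfl
      · exact adj00P (by omega) rfl (by omega)
      · intro j hj
        dsimp only
        by_cases hj1 : j+1 < x-(n+2)
        · rw [if_pos (by omega), if_pos hj1]
          exact (adj00P (by omega) (by omega) (by omega)).symm
        · by_cases hj2 : j < x-(n+2)
          · rw [if_pos hj2, if_neg (by omega)]
            have e1 : x-j = n+3 := by omega
            have e2 : j+1-(x-(n+2)) = 0 := by omega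
            rw [e1, e2, hπ0]
            exact (adj00P (by omega) rfl (by omega)).symm
          · rw [if_neg hj2, if_neg (by omega)]
            have e2 : j+1-(x-(n+2)) = (j-(x-(n+2)))+1 := by omega
            rw [e2]
            exact adj00K (hπlt _ (by omega)) (hπlt _ (by omega))
              (fun h => by have := hπinj h; omega)
      · dsimp only
        rw [if_neg (by omega)]
        exact adj00K (hπlt _ (by omega)) (hπlt _ (by omega))
          (fun h => by have := hπinj h; omega)
      · dsimp only
        rw [if_neg (by omega)]
        exact adj00K (hπlt _ (by omega)) (hπlt _ (by omega))
          (fun h => by have := hπinj h; omega)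
      · intro a c ha hc h
        dsimp only at h
        by_cases ha' : a < x-(n+2) <;> by_cases hc' : c < x-(n+2)
        · rw [if_pos ha', if_pos hc'] at h
          rw [e00 (by omega) (by omega)] at h
          omega
        · rw [if_pos ha', if_neg hc'] at h
          rw [e00 (by omega) (by have := hπlt (c-(x-(n+2))) (by omega); omega)] at h
          have := hπlt (c-(x-(n+2))) (by omega)
          omega
        · rw [if_neg ha', if_pos hc'] at h
          rw [e00 (by have := hπlt (a-(x-(n+2))) (by omega); omega) (by omega)] at h
          have := hπlt (a-(x-(n+2))) (by omega)
          omega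
        · rw [if_neg ha', if_neg hc'] at h
          rw [e00 (by have := hπlt (a-(x-(n+2))) (by omega); omega)
            (by have := hπlt (c-(x-(n+2))) (by omega); omega)] at h
          have := hπinj h
          omega
      · intro a ha
        dsimp only
        refine ⟨?_, ?_, ?_⟩
        · intro h
          by_cases ha' : a < x-(n+2)
          · rw [if_pos ha'] at h
            rw [e00 (by omega) (by omega)] at h
            omega
          · rw [if_neg ha'] at h
            rw [e00 (by omega) (by have := hπlt (a-(x-(n+2))) (by omega); omega)] at h
            have := hπlt (a-(x-(n+2))) (by omega)
            omega
        · intro h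
          by_cases ha' : a < x-(n+2)
          · rw [if_pos ha'] at h
            rw [e00 (by have := hπlt (n-(x-(n+2))+1) (by omega); omega) (by omega)] at h
            have := hπlt (n-(x-(n+2))+1) (by omega)
            omega
          · rw [if_neg ha'] at h
            rw [e00 (by have := hπlt (n-(x-(n+2))+1) (by omega); omega)
              (by have := hπlt (a-(x-(n+2))) (by omega); omega)] at h
            have := hπinj h
            omega
        · intro h
          by_cases ha' : a < x-(n+2)
          · rw [if_pos ha'] at h
            rw [e00 (by have := hπlt (n-(x-(n+2))+2) (by omega); omega) (by omega)] at h
            have := hπlt (n-(x-(n+2))+2) (by omega)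
            omega
          · rw [if_neg ha'] at h
            rw [e00 (by have := hπlt (n-(x-(n+2))+2) (by omega); omega)
              (by have := hπlt (a-(x-(n+2))) (by omega); omega)] at h
            have := hπinj h
            omega
      · refine ⟨?_, ?_, ?_⟩
        · intro h
          rw [e00 (by omega) (by have := hπlt (n-(x-(n+2))+1) (by omega); omega)] at h
          have := hπlt (n-(x-(n+2))+1) (by omega)
          omega
        · intro h
          rw [e00 (by omega) (by have := hπlt (n-(x-(n+2))+2) (by omega); omega)] at h
          have := hπlt (n-(x-(n+2))+2) (by omega)
          omega
        · intro h
          rw [e00 (by have := hπlt (n-(x-(n+2))+1) (by omega); omega)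
            (by have := hπlt (n-(x-(n+2))+2) (by omega); omega)] at h
          have := hπinj h
          omega
      · intro w hw
        obtain ⟨hnadj, hne⟩ := hSv w hw
        refine ⟨?_, ?_, ?_, ?_⟩
        · intro h
          exact hnadj (h ▸ adj00P (by omega) rfl (by omega))
        · exact hzS w hw (π (n-(x-(n+2))+1)) (by have := hπlt (n-(x-(n+2))+1) (by omega); omega)
            (hπne_z (n-(x-(n+2))+1) (by omega))
        · exact hzS w hw (π (n-(x-(n+2))+2)) (by have := hπlt (n-(x-(n+2))+2) (by omega); omega)
            (hπne_z (n-(x-(n+2))+2) (by omega))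
        · intro a ha h
          dsimp only at h
          by_cases ha' : a < x-(n+2)
          · rw [if_pos ha'] at h
            by_cases ha0 : a = 0
            · subst ha0
              exact hne (by simpa using h)
            · by_cases ha1 : a = 1
              · subst ha1
                exact hnadj (h ▸ (adj00P (by omega) (by omega) (by omega)).symm)
              · exact hup w hw (x-a) (by omega) (by omega) h
          · rw [if_neg ha'] at h
            exact hzS w hw (π (a-(x-(n+2)))) (by have := hπlt (a-(x-(n+2))) (by omega); omega)
              (hπne_z (a-(x-(n+2))) (by omega)) h
    by_cases hz : ∃ w ∈ S, ∃ y, y < n+2 ∧ w = v0 n ε y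
    · obtain ⟨wz, hwzS, yz, hyz, hwz⟩ := hz
      refine key yz hyz ?_
      intro w hw y hy hyne h
      have : w = wz := hS hw hwzS
      rw [this, hwz] at h
      rw [e00 (by omega) (by omega)] at h
      omega
    · refine key 0 (by omega) ?_
      intro w hw y hy hyne h
      by_cases hy' : y < n+2
      · exact hz ⟨w, hw, y, hy', h⟩
      · have hy2 : y = n+2 := by omega
        subst hy2
        by_cases hs : x = n+3
        · obtain ⟨hnadj, -⟩ := hSv w hw
          exact hnadj (h ▸ (adj00P (by omega) (by omega) (by omega)).symm)
        · exact hup w hw (n+2) (by omega) (by omega) h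
end ConfP
end BB
namespace BB
open SimpleGraph
section ConfH
variable {n : ℕ} {ε : ℕ → Bool} (hn : 1 ≤ n)
set_option linter.unusedSectionVars false

include hn in
/-- configuration rooted at a highway vertex. -/
lemma conf_hw {m c : ℕ} (hc : c < n + (ε m).toNat)
    (S : Set (GV n ε)) (hS : S.Subsingleton)
    (hSv : ∀ w ∈ S, ¬ (GEps n ε).Adj (v3 n ε m c) w ∧ w ≠ v3 n ε m c)
    (hT : ∀ w ∈ S, ¬ Uncond n ε w) :
    Conf n ε (v3 n ε m c) S := by
  have hE : (ε m).toNat ≤ 1 := by rcases ε m with _|_ <;> simp [Bool.toNat]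
  have keyL : c ≤ n-1 → (∀ w ∈ S, ∀ c', c' < c → w ≠ v3 n ε m c') →
      Conf n ε (v3 n ε m c) S := by
    intro hcn hlow
    have sB : ∀ t, t ≤ n+1 → sw 0 (n+1) t < n+2 :=
      fun t ht => sw_lt (by omega) (by omega) (by omega)
    have hb_adj : (GEps n ε).Adj (v3 n ε m c)
        (if c+1 < n + (ε m).toNat then v3 n ε m (c+1) else v1 n ε (m+1) 0) := by
      by_cases h1 : c+1 < n + (ε m).toNat
      · rw [if_pos h1]
        exact adj33 hn rfl h1
      · rw [if_neg h1]
        exact adj3l hn (by omega)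
    refine ⟨if c+1 < n + (ε m).toNat then v3 n ε m (c+1) else v1 n ε (m+1) 0,
      v1 n ε m (sw 0 (n+1) (n-c)), v1 n ε m (sw 0 (n+1) (n-c+1)),
      fun j => if j ≤ c then v3 n ε m (c-j) else v1 n ε m (sw 0 (n+1) (j-(c+1))),
      ?_, ?_, ?_, ?_, ?_, ?_, ?_, ?_, ?_⟩
    · dsimp only
      rw [if_pos (by omega)]
      rfl
    · exact hb_adj
    · intro j hj
      dsimp only
      by_cases hj1 : j+1 ≤ c
      · rw [if_pos (by omega), if_pos hj1]
        exact (adj33 hn (by omega) (by omega)).symm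
      · by_cases hj2 : j ≤ c
        · rw [if_pos hj2, if_neg (by omega)]
          have e1 : c-j = 0 := by omega
          have e2 : j+1-(c+1) = 0 := by omega
          rw [e1, e2, sw_left]
          exact (adjkr hn).symm
        · rw [if_neg hj2, if_neg (by omega)]
          have e2 : j+1-(c+1) = (j-(c+1))+1 := by omega
          rw [e2]
          exact adjkk (sB _ (by omega)) (sB _ (by omega))
            (fun h => by have := sw_inj h; omega)
    · dsimp only
      rw [if_neg (by omega)]
      exact adjkk (sB _ (by omega)) (sB _ (by omega)) (fun h => by have := sw_inj h; omega)
    · dsimp only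
      rw [if_neg (by omega)]
      exact adjkk (sB _ (by omega)) (sB _ (by omega)) (fun h => by have := sw_inj h; omega)
    · intro a c' ha hc' h
      dsimp only at h
      by_cases ha' : a ≤ c <;> by_cases hc'' : c' ≤ c
      · rw [if_pos ha', if_pos hc''] at h
        rw [e33 (by omega) (by omega)] at h
        omega
      · rw [if_pos ha', if_neg hc''] at h
        exact absurd h.symm (ne13 hn)
      · rw [if_neg ha', if_pos hc''] at h
        exact absurd h (ne13 hn)
      · rw [if_neg ha', if_neg hc''] at h
        rw [e11 (sB _ (by omega)) (sB _ (by omega))] at h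
        have := sw_inj h.2
        omega
    · intro a ha
      dsimp only
      refine ⟨?_, ?_, ?_⟩
      · intro h
        by_cases h1 : c+1 < n + (ε m).toNat
        · rw [if_pos h1] at h
          by_cases ha' : a ≤ c
          · rw [if_pos ha'] at h
            rw [e33 (by omega) (by omega)] at h
            omega
          · rw [if_neg ha'] at h
            exact ne13 hn h.symm
        · rw [if_neg h1] at h
          by_cases ha' : a ≤ c
          · rw [if_pos ha'] at h
            exact ne13 hn h
          · rw [if_neg ha'] at h
            rw [e11 (by omega) (sB _ (by omega))] at h
            omega
      · intro h
        by_cases ha' : a ≤ c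
        · rw [if_pos ha'] at h
          exact ne13 hn h
        · rw [if_neg ha'] at h
          rw [e11 (sB _ (by omega)) (sB _ (by omega))] at h
          have := sw_inj h.2
          omega
      · intro h
        by_cases ha' : a ≤ c
        · rw [if_pos ha'] at h
          exact ne13 hn h
        · rw [if_neg ha'] at h
          rw [e11 (sB _ (by omega)) (sB _ (by omega))] at h
          have := sw_inj h.2
          omega
    · refine ⟨?_, ?_, ?_⟩
      · intro h
        by_cases h1 : c+1 < n + (ε m).toNat
        · rw [if_pos h1] at h
          exact ne13 hn h.symm
        · rw [if_neg h1] at h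
          rw [e11 (by omega) (sB _ (by omega))] at h
          omega
      · intro h
        by_cases h1 : c+1 < n + (ε m).toNat
        · rw [if_pos h1] at h
          exact ne13 hn h.symm
        · rw [if_neg h1] at h
          rw [e11 (by omega) (sB _ (by omega))] at h
          omega
      · intro h
        rw [e11 (sB _ (by omega)) (sB _ (by omega))] at h
        have := sw_inj h.2
        omega
    · intro w hw
      obtain ⟨hnadj, hne⟩ := hSv w hw
      have hTw := hT w hw
      refine ⟨?_, ?_, ?_, ?_⟩
      · intro h
        exact hnadj (h ▸ hb_adj)
      · intro h
        exact hTw (Or.inl ⟨m, sw 0 (n+1) (n-c), sB _ (by omega), h⟩)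
      · intro h
        exact hTw (Or.inl ⟨m, sw 0 (n+1) (n-c+1), sB _ (by omega), h⟩)
      · intro a ha h
        dsimp only at h
        by_cases ha' : a ≤ c
        · rw [if_pos ha'] at h
          by_cases ha0 : a = 0
          · subst ha0
            exact hne (by simpa using h)
          · by_cases ha1 : a = 1
            · subst ha1
              exact hnadj (h ▸ (adj33 hn (by omega) (by omega)).symm)
            · exact hlow w hw (c-a) (by omega) h
        · rw [if_neg ha'] at h
          exact hTw (Or.inl ⟨m, sw 0 (n+1) (a-(c+1)), sB _ (by omega), h⟩)
  have keyR : 1 ≤ c → (∀ w ∈ S, ∀ c', c < c' → c' < n + (ε m).toNat → w ≠ v3 n ε m c') →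
      Conf n ε (v3 n ε m c) S := by
    intro hc1 hhigh
    set E : ℕ := (ε m).toNat with hEdef
    set L : ℕ := n + E with hLdef
    refine ⟨v3 n ε m (c-1), v1 n ε (m+1) (c-E+1), v1 n ε (m+1) (c-E+2),
      fun j => if j ≤ L-1-c then v3 n ε m (c+j) else v1 n ε (m+1) (j-(L-c)),
      ?_, ?_, ?_, ?_, ?_, ?_, ?_, ?_, ?_⟩
    · dsimp only
      rw [if_pos (by omega)]
      rfl
    · exact (adj33 hn (by omega) (by omega)).symm
    · intro j hj
      dsimp only
      by_cases hj1 : j+1 ≤ L-1-c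
      · rw [if_pos (by omega), if_pos hj1]
        exact adj33 hn (by omega) (by omega)
      · by_cases hj2 : j ≤ L-1-c
        · rw [if_pos hj2, if_neg (by omega)]
          have e1 : c+j = n + (ε m).toNat - 1 := by omega
          have e2 : j+1-(L-c) = 0 := by omega
          rw [e1, e2]
          exact adj3l hn rfl
        · rw [if_neg hj2, if_neg (by omega)]
          have e2 : j+1-(L-c) = (j-(L-c))+1 := by omega
          rw [e2]
          exact adjkk (by omega) (by omega) (by omega)
    · dsimp only
      rw [if_neg (by omega)]
      exact adjkk (by omega) (by omega) (by omega)
    · dsimp only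
      rw [if_neg (by omega)]
      exact adjkk (by omega) (by omega) (by omega)
    · intro a c' ha hc' h
      dsimp only at h
      by_cases ha' : a ≤ L-1-c <;> by_cases hc'' : c' ≤ L-1-c
      · rw [if_pos ha', if_pos hc''] at h
        rw [e33 (by omega) (by omega)] at h
        omega
      · rw [if_pos ha', if_neg hc''] at h
        exact absurd h.symm (ne13 hn)
      · rw [if_neg ha', if_pos hc''] at h
        exact absurd h (ne13 hn)
      · rw [if_neg ha', if_neg hc''] at h
        rw [e11 (by omega) (by omega)] at h
        omega
    · intro a ha
      dsimp only
      refine ⟨?_, ?_, ?_⟩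
      · intro h
        by_cases ha' : a ≤ L-1-c
        · rw [if_pos ha'] at h
          rw [e33 (by omega) (by omega)] at h
          omega
        · rw [if_neg ha'] at h
          exact ne13 hn h.symm
      · intro h
        by_cases ha' : a ≤ L-1-c
        · rw [if_pos ha'] at h
          exact ne13 hn h
        · rw [if_neg ha'] at h
          rw [e11 (by omega) (by omega)] at h
          omega
      · intro h
        by_cases ha' : a ≤ L-1-c
        · rw [if_pos ha'] at h
          exact ne13 hn h
        · rw [if_neg ha'] at h
          rw [e11 (by omega) (by omega)] at h
          omega
    · refine ⟨fun h => ne13 hn h.symm, fun h => ne13 hn h.symm, fun h => ?_⟩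
      rw [e11 (by omega) (by omega)] at h
      omega
    · intro w hw
      obtain ⟨hnadj, hne⟩ := hSv w hw
      have hTw := hT w hw
      refine ⟨?_, ?_, ?_, ?_⟩
      · intro h
        exact hnadj (h ▸ (adj33 hn (by omega) (by omega)).symm)
      · intro h
        exact hTw (Or.inl ⟨m+1, c-E+1, by omega, h⟩)
      · intro h
        exact hTw (Or.inl ⟨m+1, c-E+2, by omega, h⟩)
      · intro a ha h
        dsimp only at h
        by_cases ha' : a ≤ L-1-c
        · rw [if_pos ha'] at h
          by_cases ha0 : a = 0
          · subst ha0
            exact hne (by simpa using h)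
          · by_cases ha1 : a = 1
            · subst ha1
              exact hnadj (h ▸ adj33 hn (by omega) (by omega))
            · exact hhigh w hw (c+a) (by omega) (by omega) h
        · rw [if_neg ha'] at h
          exact hTw (Or.inl ⟨m+1, a-(L-c), by omega, h⟩)
  by_cases hR : ∃ w ∈ S, ∃ c', c < c' ∧ c' < n + (ε m).toNat ∧ w = v3 n ε m c'
  · obtain ⟨w0, hw0S, c0, hc0a, hc0b, hw0⟩ := hR
    refine keyL (by omega) ?_
    intro w hw c' hc' h
    have : w = w0 := hS hw hw0S
    rw [this, hw0] at h
    rw [e33 (by omega) (by omega)] at h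
    omega
  · by_cases hL2 : (∃ w ∈ S, ∃ c', c' < c ∧ w = v3 n ε m c') ∨ c = n
    · refine keyR ?_ ?_
      · rcases hL2 with ⟨w0, hw0S, c0, hc0, hw0⟩ | rfl
        · omega
        · omega
      · intro w hw c' hc1 hc2 h
        exact hR ⟨w, hw, c', hc1, hc2, h⟩
    · push_neg at hL2
      refine keyL (by omega) ?_
      intro w hw c' hc' h
      exact hL2.1 w hw c' hc' h
end ConfH
end BB
namespace BB
open SimpleGraph
section Main
variable {n : ℕ} {ε : ℕ → Bool}

theorem confU (hn : 1 ≤ n) (u : GV n ε) (hu : Uncond n ε u) (S : Set (GV n ε))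
    (hS : S.Subsingleton) (hSu : ∀ w ∈ S, ¬ (GEps n ε).Adj u w ∧ w ≠ u) :
    Conf n ε u S := by
  rcases hu with ⟨m, i, hi, rfl⟩ | ⟨m, i, x, hi, hx1, hx2, rfl⟩ | ⟨x, hx1, hx2, rfl⟩
  · exact conf_k hn hi S hS hSu
  · by_cases hq0 : x = n+2
    · subst hq0
      exact conf_q0 hn hi S hSu
    · exact conf_q hn hi (by omega) hx2 S hS hSu
  · by_cases hp0 : x = n+2
    · subst hp0
      exact conf_p0 hn S hSu
    · exact conf_p hn (by omega) hx2 S hS hSu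

theorem confAll (hn : 1 ≤ n) (v : GV n ε) (S : Set (GV n ε))
    (hS : S.Subsingleton) (hSv : ∀ w ∈ S, ¬ (GEps n ε).Adj v w ∧ w ≠ v)
    (hT : ∀ w ∈ S, ¬ Uncond n ε w) :
    Conf n ε v S := by
  rcases gv_cases hn v with ⟨x, hx, rfl⟩ | ⟨m, i, hi, rfl⟩ | ⟨m, i, x, hi, hx, rfl⟩ |
    ⟨m, c, hcc, rfl⟩
  · by_cases h1 : x < n+2
    · exact conf_dint hn h1 S hSv hT
    · by_cases h2 : x = n+2
      · subst h2
        exact conf_p0 hn S hSv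
      · by_cases h3 : x ≤ 2*n+2
        · exact conf_p hn (by omega) h3 S hS hSv
        · have : x = 2*n+3 := by omega
          subst this
          exact conf_l0 hn S hSv hT
  · exact conf_k hn hi S hS hSv
  · by_cases h1 : x < n+2
    · exact conf_kint hn hi h1 S hSv hT
    · by_cases h2 : x = n+2
      · subst h2
        exact conf_q0 hn hi S hSv
      · exact conf_q hn hi (by omega) (by omega) S hS hSv
  · exact conf_hw hn hcc S hS hSv hT

theorem core (hn : 1 ≤ n) (v u : GV n ε) (hne : u ≠ v)
    (hnadj : ¬ (GEps n ε).Adj v u) : Conf n ε v {u} ∨ Conf n ε u {v} := by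
  by_cases hU : Uncond n ε u
  · refine Or.inr (confU hn u hU {v} Set.subsingleton_singleton ?_)
    rintro w rfl
    exact ⟨fun h => hnadj h.symm, fun h => hne h.symm⟩
  · refine Or.inl (confAll hn v {u} Set.subsingleton_singleton ?_ ?_)
    · rintro w rfl
      exact ⟨hnadj, hne⟩
    · rintro w rfl
      exact hU

theorem l1 (hn : 1 ≤ n) (v : GV n ε) : Conf n ε v ∅ :=
  confAll hn v ∅ Set.subsingleton_empty (by simp) (by simp)

end Main
end BB

/-- If `G_ε` is a subgraph of a `B_n`-free graph `G` (witnessed by an injective graph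
    homomorphism `f`), then every vertex of `G_ε` has the same degree in `G_ε` as
    in `G`. -/
theorem gEps_degree_eq (n : ℕ) (hn : 1 ≤ n) (ε : ℕ → Bool) {V : Type*}
    (G : SimpleGraph V) (f : GEps n ε →g G) (hf : Function.Injective f)
    (hG : GraphFree (Bridge n) G) (v : GV n ε) :
    ((GEps n ε).neighborSet v).encard = (G.neighborSet (f v)).encard := by
  have key : G.neighborSet (f v) = f '' ((GEps n ε).neighborSet v) := by
    apply Set.Subset.antisymm
    · intro y hy
      rw [SimpleGraph.mem_neighborSet] at hy
      by_contra hni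
      have hni' : ∀ u : GV n ε, (GEps n ε).Adj v u → f u ≠ y := by
        intro u hu heq
        exact hni ⟨u, hu, heq⟩
      by_cases hr : ∃ u : GV n ε, f u = y
      · obtain ⟨u, rfl⟩ := hr
        have hnadj : ¬ (GEps n ε).Adj v u := fun h => hni' u h rfl
        have hune : u ≠ v := by
          rintro rfl
          exact G.irrefl hy
        rcases BB.core hn v u hune hnadj with hC | hC
        · refine hG (BB.conf_bridge hn G f hf hC (f u) hy ?_)
          intro w hw
          rw [Set.mem_singleton_iff]
          exact hf hw
        · refine hG (BB.conf_bridge hn G f hf hC (f v) (G.adj_symm hy) ?_)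
          intro w hw
          rw [Set.mem_singleton_iff]
          exact hf hw
      · push_neg at hr
        refine hG (BB.conf_bridge hn G f hf (BB.l1 hn v) y hy ?_)
        intro w hw
        exact absurd hw (hr w)
    · rintro y ⟨u, hu, rfl⟩
      rw [SimpleGraph.mem_neighborSet] at hu ⊢
      exact f.map_adj hu
  rw [key, Set.InjOn.encard_image (Function.Injective.injOn hf)]
end

section
/- For k ≥ 2, if f_1 and f_2 are two embeddings of the graph U into a graph G that omits all cycles of length at most 2k, and f_1(x^0_i) = f_2(x^0_i) for all i ∈ ℤ_5, then f_1 = f_2. -/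
open SimpleGraph

/-- `G` omits all cycles of length at most `2k`:
    every cycle in `G` has length greater than `2k`. -/
def NoShortCycles (k : ℕ) {V : Type*} (G : SimpleGraph V) : Prop :=
  ∀ (v : V) (c : G.Walk v v), c.IsCycle → 2 * k < c.length

/-- Vertex set of the graph `U`: `Sum.inl i` is `x⁰ᵢ` (`i ∈ ℤ₅`), and
    `Sum.inr (m, i, j)` is the inner vertex `yᵐ_{i,j+1}` of the path of `S(m)` from
    `xᵐᵢ` to `xᵐᵢ₊₁`.  The vertices `xᵐᵢ` for `m ≥ 1` are identified with inner
    vertices of level `m - 1` (see `IsXVert`), so they need no vertices of their own. -/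
abbrev UV (k : ℕ) := Fin 5 ⊕ (ℕ × Fin 5 × Fin (k - 1))

/-- `u` is the vertex `xᵐᵢ` of `U`: for `m = 0` it is `Sum.inl i`, and for
    `m = m' + 1` it is the inner vertex `y^{m'}_{2i, ⌊(k+1)/2⌋}` of `S(m')`
    (with `0`-based inner index `⌊(k+1)/2⌋ - 1`). -/
def IsXVert (k : ℕ) (m : ℕ) (i : Fin 5) (u : UV k) : Prop :=
  (m = 0 ∧ u = Sum.inl i) ∨
  (∃ (m' : ℕ) (j : Fin (k - 1)), m = m' + 1 ∧ (j : ℕ) + 1 = (k + 1) / 2 ∧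
    u = Sum.inr (m', 2 * i, j))

/-- The graph `U = ⋃ₘ U(m)`: pairwise disjoint copies `S(m)` of `S_k`, where `S(m+1)`
    is freely adjoined to `S(m)` by identifying `x^{m+1}ᵢ` with `yᵐ_{2i,⌊(k+1)/2⌋}`.
    Each `S(m)` consists, for `i ∈ ℤ₅`, of a simple path
    `xᵐᵢ, yᵐ_{i,1}, …, yᵐ_{i,k-1}, xᵐᵢ₊₁` of length `k`. -/
def GraphU (k : ℕ) : SimpleGraph (UV k) :=
  SimpleGraph.fromRel (fun a b =>
    ∃ (m : ℕ) (i : Fin 5),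
      (IsXVert k m i a ∧ ∃ j : Fin (k - 1), (j : ℕ) = 0 ∧ b = Sum.inr (m, i, j)) ∨
      (∃ j j' : Fin (k - 1), (j' : ℕ) = (j : ℕ) + 1 ∧
        a = Sum.inr (m, i, j) ∧ b = Sum.inr (m, i, j')) ∨
      (∃ j : Fin (k - 1), (j : ℕ) = k - 2 ∧ a = Sum.inr (m, i, j) ∧ IsXVert k m (i + 1) b))

namespace GraphURigidAux

variable {V : Type*} {G : SimpleGraph V}

/-- Inclusion homomorphism of an induced subgraph. -/
def inclHom (G : SimpleGraph V) (s : Set V) : G.induce s →g G :=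
  ⟨Subtype.val, fun h => h⟩

lemma inclHom_injective (G : SimpleGraph V) (s : Set V) :
    Function.Injective (inclHom G s) := Subtype.val_injective

/-- Lift a walk whose support lies in `s` to the induced subgraph on `s`. -/
def liftWalk {s : Set V} : ∀ {u v : V} (p : G.Walk u v)
    (_ : ∀ x ∈ p.support, x ∈ s) (hu : u ∈ s) (hv : v ∈ s),
    (G.induce s).Walk ⟨u, hu⟩ ⟨v, hv⟩
  | _, _, Walk.nil, _, _, _ => Walk.nil
  | _, _, Walk.cons ha p, hs, _, hv =>
      Walk.cons (by exact ha)
        (liftWalk p (fun x hx => hs x (by simp [Walk.support_cons, hx]))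
          (hs _ (by simp [Walk.support_cons, Walk.start_mem_support])) hv)

lemma liftWalk_map {s : Set V} : ∀ {u v : V} (p : G.Walk u v)
    (hs : ∀ x ∈ p.support, x ∈ s) (hu : u ∈ s) (hv : v ∈ s),
    (liftWalk p hs hu hv).map (inclHom G s) = p
  | _, _, Walk.nil, _, _, _ => rfl
  | _, _, Walk.cons ha p, hs, hu, hv => by
      simp only [liftWalk, Walk.map_cons]
      exact congrArg _ (liftWalk_map p _ _ _)

/-- In a graph with no cycles of length at most `2k`, paths of length at most `k`
    between two given vertices are unique. -/
lemma short_path_unique {k : ℕ} (hG : NoShortCycles k G) {u v : V}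
    (p q : G.Walk u v) (hp : p.IsPath) (hq : q.IsPath)
    (hpl : p.length ≤ k) (hql : q.length ≤ k) : p = q := by
  classical
  by_contra hne
  rcases eq_or_ne u v with rfl | huv
  · rw [Walk.isPath_iff_eq_nil] at hp hq
    exact hne (hp.trans hq.symm)
  set A := p.support.toFinset with hA
  set B := q.support.toFinset with hB
  set s : Set V := ↑(A ∪ B) with hs
  have hps : ∀ x ∈ p.support, x ∈ s := by
    intro x hx; simp [hs, hA, List.mem_toFinset, hx]
  have hqs : ∀ x ∈ q.support, x ∈ s := by
    intro x hx; simp [hs, hB, List.mem_toFinset, hx]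
  have hu : u ∈ s := hps u p.start_mem_support
  have hv : v ∈ s := hps v p.end_mem_support
  set p' := liftWalk p hps hu hv with hp'def
  set q' := liftWalk q hqs hu hv with hq'def
  have hmapp : p'.map (inclHom G s) = p := liftWalk_map p hps hu hv
  have hmapq : q'.map (inclHom G s) = q := liftWalk_map q hqs hu hv
  have hp' : p'.IsPath := Walk.IsPath.of_map (f := inclHom G s) (by rw [hmapp]; exact hp)
  have hq' : q'.IsPath := Walk.IsPath.of_map (f := inclHom G s) (by rw [hmapq]; exact hq)
  have hne' : p' ≠ q' := by
    intro h
    exact hne (by rw [← hmapp, ← hmapq, h])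
  have hnac : ¬ (G.induce s).IsAcyclic := by
    intro hac
    exact hne' (Subtype.mk_eq_mk.mp (isAcyclic_iff_path_unique.mp hac ⟨p', hp'⟩ ⟨q', hq'⟩))
  unfold SimpleGraph.IsAcyclic at hnac
  push_neg at hnac
  obtain ⟨w, c, hc⟩ := hnac
  have hcyc : (c.map (inclHom G s)).IsCycle := hc.map (inclHom_injective G s)
  have hlen := hG _ _ hcyc
  rw [Walk.length_map] at hlen
  have h1 : c.length ≤ Fintype.card s := by
    have hnd : c.support.tail.Nodup := hc.2
    have := hnd.length_le_card
    have h2 : c.support.tail.length = c.length := by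
      rw [List.length_tail, Walk.length_support]
      omega
    omega
  have hcard : Fintype.card s ≤ 2 * k := by
    have hcc : Fintype.card s = (A ∪ B).card := Fintype.card_coe _
    have hAB := Finset.card_union_add_card_inter A B
    have h2le : 2 ≤ (A ∩ B).card := by
      have hsub : ({u, v} : Finset V) ⊆ A ∩ B := by
        intro x hx
        rcases Finset.mem_insert.mp hx with rfl | hx
        · simp [hA, hB, Finset.mem_inter, List.mem_toFinset,
            Walk.start_mem_support]
        · rcases Finset.mem_singleton.mp hx with rfl
          simp [hA, hB, Finset.mem_inter, List.mem_toFinset,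
            Walk.end_mem_support]
      calc 2 = ({u, v} : Finset V).card := (Finset.card_pair huv).symm
        _ ≤ _ := Finset.card_le_card hsub
    have hAcard : A.card = p.length + 1 := by
      rw [hA, List.toFinset_card_of_nodup hp.support_nodup, Walk.length_support]
    have hBcard : B.card = q.length + 1 := by
      rw [hB, List.toFinset_card_of_nodup hq.support_nodup, Walk.length_support]
    omega
  omega

/-- Build a walk from a vertex sequence with consecutive adjacencies. -/
def mkWalk (G : SimpleGraph V) : ∀ (c : ℕ → V) (n : ℕ)
    (_ : ∀ t, t < n → G.Adj (c t) (c (t + 1))), G.Walk (c 0) (c n)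
  | _, 0, _ => Walk.nil
  | c, n + 1, h =>
      Walk.cons (h 0 (Nat.succ_pos n))
        (mkWalk G (fun t => c (t + 1)) n (fun t ht => h (t + 1) (by omega)))

lemma mkWalk_length (G : SimpleGraph V) : ∀ (n : ℕ) (c : ℕ → V) h,
    (mkWalk G c n h).length = n
  | 0, _, _ => rfl
  | n + 1, c, h => by
      simp only [mkWalk, Walk.length_cons, mkWalk_length G n]

lemma mkWalk_getVert (G : SimpleGraph V) : ∀ (n : ℕ) (c : ℕ → V) h (t : ℕ), t ≤ n →
    (mkWalk G c n h).getVert t = c t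
  | 0, c, _, t, ht => by
      have : t = 0 := Nat.le_zero.mp ht
      subst this; rfl
  | n + 1, c, h, 0, _ => rfl
  | n + 1, c, h, t + 1, ht => by
      simp only [mkWalk, Walk.getVert_cons_succ]
      exact mkWalk_getVert G n _ _ t (by omega)

lemma mkWalk_support (G : SimpleGraph V) : ∀ (n : ℕ) (c : ℕ → V) h,
    (mkWalk G c n h).support = (List.range (n + 1)).map c
  | 0, c, _ => rfl
  | n + 1, c, h => by
      rw [mkWalk, Walk.support_cons, mkWalk_support G n]
      rw [@List.range_succ_eq_map (n + 1), List.map_cons, List.map_map]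
      rfl

lemma mkWalk_isPath (G : SimpleGraph V) (n : ℕ) (c : ℕ → V) (h)
    (hinj : ∀ s ≤ n, ∀ t ≤ n, c s = c t → s = t) :
    (mkWalk G c n h).IsPath := by
  rw [Walk.isPath_def, mkWalk_support]
  refine List.Nodup.map_on ?_ List.nodup_range
  intro x hx y hy hxy
  rw [List.mem_range] at hx hy
  exact hinj x (by omega) y (by omega) hxy

end GraphURigidAux

open GraphURigidAux

/-- The vertex `xᵐᵢ` as an element of `UV k`. -/
def xvert (k : ℕ) (hk : 2 ≤ k) : ℕ → Fin 5 → UV k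
  | 0, i => Sum.inl i
  | m + 1, i => Sum.inr (m, 2 * i, ⟨(k + 1) / 2 - 1, by omega⟩)

/-- The `t`-th vertex of the path of `S(m)` from `xᵐᵢ` to `xᵐᵢ₊₁`. -/
def vseq (k : ℕ) (hk : 2 ≤ k) (m : ℕ) (i : Fin 5) (t : ℕ) : UV k :=
  if t = 0 then xvert k hk m i
  else if h : t < k then Sum.inr (m, i, ⟨t - 1, by omega⟩)
  else xvert k hk m (i + 1)

lemma vseq_zero (k : ℕ) (hk : 2 ≤ k) (m : ℕ) (i : Fin 5) :
    vseq k hk m i 0 = xvert k hk m i := by simp [vseq]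

lemma vseq_last (k : ℕ) (hk : 2 ≤ k) (m : ℕ) (i : Fin 5) :
    vseq k hk m i k = xvert k hk m (i + 1) := by
  rw [vseq, if_neg (by omega), dif_neg (by omega)]

lemma vseq_mid (k : ℕ) (hk : 2 ≤ k) (m : ℕ) (i : Fin 5) {t : ℕ}
    (ht0 : t ≠ 0) (htk : t < k) :
    vseq k hk m i t = Sum.inr (m, i, ⟨t - 1, by omega⟩) := by
  rw [vseq, if_neg ht0, dif_pos htk]

lemma xvert_ne_inr (k : ℕ) (hk : 2 ≤ k) (m : ℕ) (i i' : Fin 5) (j : Fin (k - 1)) :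
    xvert k hk m i ≠ Sum.inr (m, i', j) := by
  cases m with
  | zero => simp [xvert]
  | succ m =>
      simp only [xvert, ne_eq, Sum.inr.injEq, Prod.mk.injEq]
      rintro ⟨h, -⟩
      omega

lemma xvert_ne_succ (k : ℕ) (hk : 2 ≤ k) (m : ℕ) (i : Fin 5) :
    xvert k hk m i ≠ xvert k hk m (i + 1) := by
  cases m with
  | zero =>
      simp only [xvert, ne_eq, Sum.inl.injEq]
      revert i; decide
  | succ m =>
      simp only [xvert, ne_eq, Sum.inr.injEq, Prod.mk.injEq, true_and]
      intro h
      have : (2 : Fin 5) * i = 2 * (i + 1) := h.1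
      revert this
      revert i; decide

lemma vseq_injOn (k : ℕ) (hk : 2 ≤ k) (m : ℕ) (i : Fin 5) :
    ∀ s ≤ k, ∀ t ≤ k, vseq k hk m i s = vseq k hk m i t → s = t := by
  have keyx : ∀ {t : ℕ} (_ : t ≠ 0) (h2 : t < k),
      vseq k hk m i t = Sum.inr (m, i, ⟨t - 1, by omega⟩) := fun h1 h2 =>
    vseq_mid k hk m i h1 h2
  intro s hs t ht heq
  by_cases hs0 : s = 0 <;> by_cases ht0 : t = 0
  · omega
  · subst hs0
    rcases eq_or_ne t k with htk | htk
    · rw [htk, vseq_zero, vseq_last] at heq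
      exact absurd heq (xvert_ne_succ k hk m i)
    · rw [vseq_zero, keyx ht0 (by omega)] at heq
      exact absurd heq (xvert_ne_inr k hk m i i _)
  · subst ht0
    rcases eq_or_ne s k with hsk | hsk
    · rw [hsk, vseq_zero, vseq_last] at heq
      exact absurd heq.symm (xvert_ne_succ k hk m i)
    · rw [vseq_zero, keyx hs0 (by omega)] at heq
      exact absurd heq.symm (xvert_ne_inr k hk m i i _)
  · rcases eq_or_ne s k with hsk | hsk <;> rcases eq_or_ne t k with htk | htk
    · omega
    · rw [hsk, vseq_last, keyx ht0 (by omega)] at heq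
      exact absurd heq (xvert_ne_inr k hk m (i + 1) i _)
    · rw [htk, vseq_last, keyx hs0 (by omega)] at heq
      exact absurd heq.symm (xvert_ne_inr k hk m (i + 1) i _)
    · rw [keyx hs0 (by omega), keyx ht0 (by omega)] at heq
      have := (Sum.inr.inj heq)
      have h2 : (⟨s - 1, by omega⟩ : Fin (k - 1)) = ⟨t - 1, by omega⟩ := by
        have := congrArg (fun x => x.2.2) this
        exact this
      have := Fin.mk.injEq _ _ _ _ ▸ h2
      have : s - 1 = t - 1 := Fin.mk.inj_iff.mp h2
      omega

lemma isXVert_xvert (k : ℕ) (hk : 2 ≤ k) (m : ℕ) (i : Fin 5) :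
    IsXVert k m i (xvert k hk m i) := by
  cases m with
  | zero => exact Or.inl ⟨rfl, rfl⟩
  | succ m =>
      exact Or.inr ⟨m, ⟨(k + 1) / 2 - 1, by omega⟩, rfl, by simp; omega, rfl⟩

lemma vseq_adj (k : ℕ) (hk : 2 ≤ k) (m : ℕ) (i : Fin 5) {t : ℕ} (ht : t < k) :
    (GraphU k).Adj (vseq k hk m i t) (vseq k hk m i (t + 1)) := by
  rw [GraphU, SimpleGraph.fromRel_adj]
  constructor
  · intro h
    have := vseq_injOn k hk m i t (by omega) (t + 1) (by omega) h
    omega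
  · left
    refine ⟨m, i, ?_⟩
    rcases Nat.eq_zero_or_pos t with rfl | htpos
    · left
      refine ⟨(vseq_zero k hk m i) ▸ isXVert_xvert k hk m i, ⟨0, by omega⟩, rfl, ?_⟩
      rw [vseq_mid k hk m i (by omega) (by omega)]
    · rcases eq_or_ne (t + 1) k with hk1 | hk1
      · right; right
        refine ⟨⟨t - 1, by omega⟩, by simp; omega, ?_, ?_⟩
        · rw [vseq_mid k hk m i (by omega) (by omega)]
        · rw [(by omega : t + 1 = k), vseq_last]
          exact isXVert_xvert k hk m (i + 1)
      · right; left
        refine ⟨⟨t - 1, by omega⟩, ⟨t, by omega⟩, by simp; omega, ?_, ?_⟩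
        · rw [vseq_mid k hk m i (by omega) (by omega)]
        · rw [vseq_mid k hk m i (by omega) (by omega)]
          simp

/-- If `f₁` and `f₂` are two embeddings (injective graph homomorphisms) of `U` into a
    graph `G` with no cycles of length at most `2k` (`k ≥ 2`), and `f₁(x⁰ᵢ) = f₂(x⁰ᵢ)`
    for all `i ∈ ℤ₅`, then `f₁ = f₂`. -/
theorem graphU_rigid (k : ℕ) (hk : 2 ≤ k) {V : Type*} (G : SimpleGraph V)
    (hG : NoShortCycles k G) (f₁ f₂ : GraphU k →g G)
    (h₁ : Function.Injective f₁) (h₂ : Function.Injective f₂)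
    (hx : ∀ i : Fin 5, f₁ (Sum.inl i) = f₂ (Sum.inl i)) : f₁ = f₂ := by
  have key : ∀ m : ℕ, (∀ i, f₁ (xvert k hk m i) = f₂ (xvert k hk m i)) →
      ∀ i : Fin 5, ∀ t ≤ k, f₁ (vseq k hk m i t) = f₂ (vseq k hk m i t) := by
    intro m hm i t ht
    set c₁ : ℕ → V := fun t => f₁ (vseq k hk m i t) with hc₁
    set c₂ : ℕ → V := fun t => f₂ (vseq k hk m i t) with hc₂
    have adj₁ : ∀ t, t < k → G.Adj (c₁ t) (c₁ (t + 1)) := fun t ht =>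
      f₁.map_adj (vseq_adj k hk m i ht)
    have adj₂ : ∀ t, t < k → G.Adj (c₂ t) (c₂ (t + 1)) := fun t ht =>
      f₂.map_adj (vseq_adj k hk m i ht)
    set p := mkWalk G c₁ k adj₁ with hp
    set q := mkWalk G c₂ k adj₂ with hq
    have h0 : c₂ 0 = c₁ 0 := by
      simp only [hc₁, hc₂, vseq_zero]; exact (hm i).symm
    have hke : c₂ k = c₁ k := by
      simp only [hc₁, hc₂, vseq_last]; exact (hm (i + 1)).symm
    have hpath₁ : p.IsPath := by
      apply mkWalk_isPath
      intro s hs t ht heq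
      exact vseq_injOn k hk m i s hs t ht (h₁ heq)
    have hpath₂ : (q.copy h0 hke).IsPath := by
      rw [Walk.isPath_copy]
      apply mkWalk_isPath
      intro s hs t ht heq
      exact vseq_injOn k hk m i s hs t ht (h₂ heq)
    have hpq : p = q.copy h0 hke := by
      apply short_path_unique hG _ _ hpath₁ hpath₂
      · rw [hp, mkWalk_length]
      · rw [Walk.length_copy, hq, mkWalk_length]
    calc f₁ (vseq k hk m i t) = p.getVert t := (mkWalk_getVert G k c₁ adj₁ t ht).symm
      _ = (q.copy h0 hke).getVert t := by rw [hpq]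
      _ = q.getVert t := Walk.getVert_copy q t h0 hke
      _ = f₂ (vseq k hk m i t) := mkWalk_getVert G k c₂ adj₂ t ht
  have xagree : ∀ m : ℕ, ∀ i : Fin 5, f₁ (xvert k hk m i) = f₂ (xvert k hk m i) := by
    intro m
    induction m with
    | zero => exact hx
    | succ m ih =>
        intro i
        have hx1 : xvert k hk (m + 1) i = vseq k hk m (2 * i) ((k + 1) / 2) := by
          rw [vseq_mid k hk m (2 * i) (by omega) (by omega)]
          rfl
        rw [hx1]
        exact key m ih (2 * i) _ (by omega)
  apply DFunLike.ext
  intro u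
  rcases u with i | ⟨m, i, j⟩
  · exact hx i
  · have hj := j.isLt
    have hu : (Sum.inr (m, i, j) : UV k) = vseq k hk m i ((j : ℕ) + 1) := by
      rw [vseq_mid k hk m i (by omega) (by omega)]
      simp
    rw [hu]
    exact key m (xagree m) i _ (by omega)
end
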